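/- arXiv:2506.18644 — 13 statements merged into one kernel-verified Lean document; each statement's English description precedes it below -/
import Mathlib

section
/- Let X be a finite nonempty set, A a finite set, H a real inner product space, η ∈ H a unit vector, and let (v_{x,a})_{x∈X,a∈A} and (w_{x,a})_{x∈X,a∈A} be families of vectors in H such that ⟨v_{x,a}, v_{x,a'}⟩ = 0 whenever a ≠ a', ⟨w_{x,b}, w_{x,b'}⟩ = 0 whenever b ≠ b', and Σ_{a∈A} v_{x,a} = η = Σ_{b∈A} w_{x,b} for every x ∈ X. If moreover ⟨v_{x,a}, w_{x,b}⟩ = 0 for every x ∈ X and all a ≠ b (the synchronicity condition), then v_{x,a} = w_{x,a} for all x ∈ X and a ∈ A. -/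
open scoped InnerProductSpace

/-- A synchronous vect-density has equal Alice and Bob vectors. -/
theorem stmt_0 {X A H : Type*} [Fintype X] [Nonempty X] [Fintype A]
    [NormedAddCommGroup H] [InnerProductSpace ℝ H]
    (η : H) (hη : ‖η‖ = 1) (v w : X → A → H)
    (hv : ∀ (x : X) (a a' : A), a ≠ a' → ⟪v x a, v x a'⟫_ℝ = 0)
    (hw : ∀ (x : X) (b b' : A), b ≠ b' → ⟪w x b, w x b'⟫_ℝ = 0)
    (hvsum : ∀ x : X, ∑ a : A, v x a = η)
    (hwsum : ∀ x : X, ∑ b : A, w x b = η)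
    (hsync : ∀ (x : X) (a b : A), a ≠ b → ⟪v x a, w x b⟫_ℝ = 0) :
    ∀ (x : X) (a : A), v x a = w x a := by
  intro x a
  have h1 : ⟪v x a, v x a⟫_ℝ = ⟪v x a, w x a⟫_ℝ := by
    have : ⟪v x a, η⟫_ℝ = ⟪v x a, v x a⟫_ℝ := by
      rw [← hvsum x, inner_sum]
      rw [Finset.sum_eq_single a]
      · intro b _ hb; exact hv x a b (Ne.symm hb)
      · intro h; exact absurd (Finset.mem_univ a) h
    have h2 : ⟪v x a, η⟫_ℝ = ⟪v x a, w x a⟫_ℝ := by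
      rw [← hwsum x, inner_sum]
      rw [Finset.sum_eq_single a]
      · intro b _ hb; exact hsync x a b (Ne.symm hb)
      · intro h; exact absurd (Finset.mem_univ a) h
    rw [← this, h2]
  have h2 : ⟪w x a, w x a⟫_ℝ = ⟪v x a, w x a⟫_ℝ := by
    have : ⟪η, w x a⟫_ℝ = ⟪w x a, w x a⟫_ℝ := by
      rw [← hwsum x, sum_inner]
      rw [Finset.sum_eq_single a]
      · intro b _ hb; exact hw x b a hb
      · intro h; exact absurd (Finset.mem_univ a) h
    have h3 : ⟪η, w x a⟫_ℝ = ⟪v x a, w x a⟫_ℝ := by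
      rw [← hvsum x, sum_inner]
      rw [Finset.sum_eq_single a]
      · intro b _ hb; exact hsync x b a hb
      · intro h; exact absurd (Finset.mem_univ a) h
    rw [← this, h3]
  have key : ⟪v x a - w x a, v x a - w x a⟫_ℝ = 0 := by
    rw [inner_sub_sub_self]
    rw [real_inner_comm (w x a) (v x a)] at *
    linarith [h1, h2]
  exact sub_eq_zero.mp (inner_self_eq_zero.mp key)
end

section
/- Let X, Y be finite nonempty sets, A a finite set, and f : X × Y → Perm(A) a unique game. Suppose there is a perfect vect-density for this game: a real inner product space H, a unit vector η ∈ H, and families (v_{x,a})_{x∈X,a∈A}, (w_{y,b})_{y∈Y,b∈A} in H with ⟨v_{x,a}, v_{x,a'}⟩ = 0 for a ≠ a', ⟨w_{y,b}, w_{y,b'}⟩ = 0 for b ≠ b', Σ_{a∈A} v_{x,a} = η = Σ_{b∈A} w_{y,b} for all x, y, all inner products ⟨v_{x,a}, w_{y,b}⟩ ≥ 0, and ⟨v_{x,a}, w_{y,b}⟩ = 0 whenever a ≠ f(x,y)(b). Then there exist functions h_A : X → A and h_B : Y → A such that h_A(x) = f(x,y)(h_B(y)) for all x ∈ X, y ∈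 Y (a perfect deterministic strategy). -/
open scoped InnerProductSpace

/-- A unique game with a perfect vect-density has a perfect deterministic strategy. -/
theorem stmt_1 {X Y A H : Type*} [Fintype X] [Nonempty X] [Fintype Y] [Nonempty Y]
    [Fintype A] [NormedAddCommGroup H] [InnerProductSpace ℝ H]
    (f : X × Y → Equiv.Perm A)
    (η : H) (hη : ‖η‖ = 1) (v : X → A → H) (w : Y → A → H)
    (hv : ∀ (x : X) (a a' : A), a ≠ a' → ⟪v x a, v x a'⟫_ℝ = 0)
    (hw : ∀ (y : Y) (b b' : A), b ≠ b' → ⟪w y b, w y b'⟫_ℝ = 0)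
    (hvsum : ∀ x : X, ∑ a : A, v x a = η)
    (hwsum : ∀ y : Y, ∑ b : A, w y b = η)
    (hpos : ∀ (x : X) (y : Y) (a b : A), 0 ≤ ⟪v x a, w y b⟫_ℝ)
    (hperf : ∀ (x : X) (y : Y) (a b : A), a ≠ f (x, y) b → ⟪v x a, w y b⟫_ℝ = 0) :
    ∃ (hA : X → A) (hB : Y → A), ∀ (x : X) (y : Y), hA x = f (x, y) (hB y) := by
  -- Step 1: ⟪v x a, η⟫ = ⟪v x a, v x a⟫
  have h1 : ∀ (x : X) (a : A), ⟪v x a, η⟫_ℝ = ⟪v x a, v x a⟫_ℝ := by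
    intro x a
    rw [← hvsum x, inner_sum]
    exact Finset.sum_eq_single a (fun a' _ ha' => hv x a a' (Ne.symm ha')) (by simp)
  -- Step 2: ⟪η, w y b⟫ = ⟪w y b, w y b⟫
  have h2 : ∀ (y : Y) (b : A), ⟪η, w y b⟫_ℝ = ⟪w y b, w y b⟫_ℝ := by
    intro y b
    rw [← hwsum y, sum_inner]
    exact Finset.sum_eq_single b (fun b' _ hb' => hw y b' b hb') (by simp)
  -- Step 3: for b = (f (x,y)).symm a, ⟪v x a, η⟫ = ⟪v x a, w y b⟫
  have h3 : ∀ (x : X) (y : Y) (a : A),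
      ⟪v x a, η⟫_ℝ = ⟪v x a, w y ((f (x, y)).symm a)⟫_ℝ := by
    intro x y a
    rw [← hwsum y, inner_sum]
    refine Finset.sum_eq_single _ (fun b' _ hb' => hperf x y a b' ?_) (by simp)
    intro h
    exact hb' (by rw [h, Equiv.symm_apply_apply])
  -- Step 4: ⟪η, w y b⟫ = ⟪v x (f (x,y) b), w y b⟫
  have h4 : ∀ (x : X) (y : Y) (b : A),
      ⟪η, w y b⟫_ℝ = ⟪v x (f (x, y) b), w y b⟫_ℝ := by
    intro x y b
    rw [← hvsum x, sum_inner]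
    exact Finset.sum_eq_single _ (fun a' _ ha' => hperf x y a' b ha') (by simp)
  -- Key identity: v x a = w y ((f (x,y)).symm a)
  have key : ∀ (x : X) (y : Y) (a : A), v x a = w y ((f (x, y)).symm a) := by
    intro x y a
    set b := (f (x, y)).symm a with hb
    have hfb : f (x, y) b = a := Equiv.apply_symm_apply _ _
    have e1 : ⟪v x a, w y b⟫_ℝ = ⟪v x a, v x a⟫_ℝ := by rw [← h3, h1]
    have e2 : ⟪v x a, w y b⟫_ℝ = ⟪w y b, w y b⟫_ℝ := by
      rw [← h2 y b, h4 x y b, hfb]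
    have : ⟪v x a - w y b, v x a - w y b⟫_ℝ = 0 := by
      rw [inner_sub_sub_self]
      have hc : ⟪w y b, v x a⟫_ℝ = ⟪v x a, w y b⟫_ℝ := real_inner_comm _ _
      linarith
    have := inner_self_eq_zero.mp this
    rw [sub_eq_zero] at this
    exact this
  -- η ≠ 0
  have hη0 : η ≠ 0 := by
    intro h; rw [h, norm_zero] at hη; norm_num at hη
  obtain ⟨x0⟩ := ‹Nonempty X›
  obtain ⟨y0⟩ := ‹Nonempty Y›
  -- find b0 with w y0 b0 ≠ 0
  have : ∃ b0 : A, w y0 b0 ≠ 0 := by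
    by_contra h
    push_neg at h
    apply hη0
    rw [← hwsum y0]
    exact Finset.sum_eq_zero fun b _ => h b
  obtain ⟨b0, hb0⟩ := this
  refine ⟨fun x => f (x, y0) b0, fun y => (f (x0, y)).symm (f (x0, y0) b0), ?_⟩
  intro x y
  by_contra hne
  -- v x (hA x) = w y0 b0
  have e1 : v x (f (x, y0) b0) = w y0 b0 := by
    rw [key x y0, Equiv.symm_apply_apply]
  -- v x (f (x,y) (hB y)) = w y (hB y) = v x0 (f (x0,y0) b0) = w y0 b0
  have e2 : v x (f (x, y) ((f (x0, y)).symm (f (x0, y0) b0))) = w y0 b0 := by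
    rw [key x y, Equiv.symm_apply_apply, ← key x0 y, key x0 y0, Equiv.symm_apply_apply]
  have := hv x _ _ hne
  rw [e1, e2, real_inner_self_eq_norm_sq] at this
  exact hb0 (by simpa using norm_eq_zero.mp (by nlinarith [norm_nonneg (w y0 b0)]))
end

section
/- Let X be a finite nonempty set, A a finite set, and f : X × X → Perm(A) a unique game with X = Y. Suppose there is a perfect synchronous vect-density for this game: a real inner product space H, a unit vector η ∈ H, and families (v_{x,a}), (w_{y,b}) (x,y ∈ X, a,b ∈ A) in H satisfying the vect-density conditions, with p(a,b|x,y) := ⟨v_{x,a}, w_{y,b}⟩ = 0 whenever a ≠ f(x,y)(b), and p(a,b|x,x) = 0 for all x and a ≠ b. Then there exists a single function h : X → A such that h(x) = f(x,y)(h(y)) for all x, y ∈ X (a perfect synchronous deterministic strategy). -/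
open scoped InnerProductSpace

private lemma eq_of_inner_eq {H : Type*} [NormedAddCommGroup H] [InnerProductSpace ℝ H]
    {a b : H} (h1 : ⟪a, a⟫_ℝ = ⟪a, b⟫_ℝ) (h2 : ⟪b, b⟫_ℝ = ⟪a, b⟫_ℝ) : a = b := by
  have : ⟪a - b, a - b⟫_ℝ = 0 := by
    rw [inner_sub_left, inner_sub_right, inner_sub_right]
    have := real_inner_comm a b
    linarith
  have := inner_self_eq_zero.mp this
  exact sub_eq_zero.mp this

/-- A unique game (with equal input sets) with a perfect synchronous vect-density has a
perfect synchronous deterministic strategy. -/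
theorem stmt_2 {X A H : Type*} [Fintype X] [Nonempty X] [Fintype A]
    [NormedAddCommGroup H] [InnerProductSpace ℝ H]
    (f : X × X → Equiv.Perm A)
    (η : H) (hη : ‖η‖ = 1) (v : X → A → H) (w : X → A → H)
    (hv : ∀ (x : X) (a a' : A), a ≠ a' → ⟪v x a, v x a'⟫_ℝ = 0)
    (hw : ∀ (y : X) (b b' : A), b ≠ b' → ⟪w y b, w y b'⟫_ℝ = 0)
    (hvsum : ∀ x : X, ∑ a : A, v x a = η)
    (hwsum : ∀ y : X, ∑ b : A, w y b = η)
    (hpos : ∀ (x y : X) (a b : A), 0 ≤ ⟪v x a, w y b⟫_ℝ)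
    (hperf : ∀ (x y : X) (a b : A), a ≠ f (x, y) b → ⟪v x a, w y b⟫_ℝ = 0)
    (hsync : ∀ (x : X) (a b : A), a ≠ b → ⟪v x a, w x b⟫_ℝ = 0) :
    ∃ h : X → A, ∀ x y : X, h x = f (x, y) (h y) := by
  classical
  -- ⟪v x a, η⟫ = ⟪v x a, v x a⟫
  have hvη : ∀ (x : X) (a : A), ⟪v x a, η⟫_ℝ = ⟪v x a, v x a⟫_ℝ := by
    intro x a
    rw [← hvsum x, inner_sum]
    exact Finset.sum_eq_single a (fun a' _ hne => hv x a a' (Ne.symm hne))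
      (fun h => absurd (Finset.mem_univ a) h)
  -- ⟪η, w y b⟫ = ⟪w y b, w y b⟫
  have hwη : ∀ (y : X) (b : A), ⟪η, w y b⟫_ℝ = ⟪w y b, w y b⟫_ℝ := by
    intro y b
    rw [← hwsum y, sum_inner]
    exact Finset.sum_eq_single b (fun b' _ hne => hw y b' b hne)
      (fun h => absurd (Finset.mem_univ b) h)
  -- ⟪η, w y b⟫ via hvsum and sync: = ⟪v y b, w y b⟫
  have hηw : ∀ (y : X) (b : A), ⟪η, w y b⟫_ℝ = ⟪v y b, w y b⟫_ℝ := by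
    intro y b
    rw [← hvsum y, sum_inner]
    exact Finset.sum_eq_single b (fun a _ hne => hsync y a b hne)
      (fun h => absurd (Finset.mem_univ b) h)
  -- ⟪v y b, η⟫ via hwsum and sync: = ⟪v y b, w y b⟫
  have hvηw : ∀ (y : X) (b : A), ⟪v y b, η⟫_ℝ = ⟪v y b, w y b⟫_ℝ := by
    intro y b
    rw [← hwsum y, inner_sum]
    exact Finset.sum_eq_single b (fun b' _ hne => hsync y b b' (Ne.symm hne))
      (fun h => absurd (Finset.mem_univ b) h)
  -- v = w
  have hveqw : ∀ (y : X) (b : A), v y b = w y b := by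
    intro y b
    refine eq_of_inner_eq ?_ ?_
    · rw [← hvη y b, hvηw y b]
    · rw [← hwη y b, hηw y b]
  -- key: v x (f (x,y) b) = v y b
  have key : ∀ (x y : X) (b : A), v x (f (x, y) b) = v y b := by
    intro x y b
    set a := f (x, y) b with ha
    have h1 : ⟪η, w y b⟫_ℝ = ⟪v x a, w y b⟫_ℝ := by
      rw [← hvsum x, sum_inner]
      exact Finset.sum_eq_single a (fun a' _ hne => hperf x y a' b (by rw [← ha]; exact hne))
        (fun h => absurd (Finset.mem_univ a) h)
    have h2 : ⟪v x a, η⟫_ℝ = ⟪v x a, w y b⟫_ℝ := by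
      rw [← hwsum y, inner_sum]
      refine Finset.sum_eq_single b (fun b' _ hne => hperf x y a b' ?_)
        (fun h => absurd (Finset.mem_univ b) h)
      intro hcontra
      exact hne ((f (x, y)).injective (by rw [← hcontra]))
    have hvw : v x a = w y b := by
      refine eq_of_inner_eq ?_ ?_
      · rw [← hvη x a, h2]
      · rw [← hwη y b, h1]
    rw [hvw, hveqw y b]
  -- pick x₀ and a₀ with v x₀ a₀ ≠ 0
  obtain ⟨x₀⟩ := ‹Nonempty X›
  have hηne : η ≠ 0 := by
    intro h; rw [h, norm_zero] at hη; norm_num at hη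
  obtain ⟨a₀, ha₀⟩ : ∃ a₀ : A, v x₀ a₀ ≠ 0 := by
    by_contra hcon
    push_neg at hcon
    apply hηne
    rw [← hvsum x₀]
    exact Finset.sum_eq_zero fun a _ => hcon a
  refine ⟨fun x => f (x, x₀) a₀, fun x y => ?_⟩
  by_contra hne
  have h1 : v x (f (x, x₀) a₀) = v x₀ a₀ := key x x₀ a₀
  have h2 : v x (f (x, y) (f (y, x₀) a₀)) = v x₀ a₀ := by
    rw [key x y (f (y, x₀) a₀), key y x₀ a₀]
  have := hv x _ _ hne
  rw [h1, h2] at this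
  exact ha₀ (inner_self_eq_zero.mp this)
end

section
/- Let Ω be a finite group, X and Y finite nonempty sets, and f : X × Y → Ω a group based game. Let π : X × Y → ℝ be a probability density with π₀ := min_{x,y} π(x,y) > 0, and let ε > 0 satisfy ε + 2|Ω|ε/π₀ + 2√(|Ω|ε/π₀) < 1. Suppose there is a vect-density p(a,b|x,y) = ⟨v_{x,a}, w_{y,b}⟩ with input sets X, Y and output set Ω whose expected winning value satisfies Σ_{x∈X, y∈Y} π(x,y) Σ_{b∈Ω} p(f(x,y)·b, b | x, y) ≥ 1 − ε. Then there exist functions h_A : X → Ω and h_B : Y → Ω such that h_A(x)·h_B(y)⁻¹ = f(x,y) for all x ∈ X, y ∈ Y; in particular, the game has a perfect deterministic strategy. -/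
open scoped InnerProductSpace

lemma stmt4_expand {E : Type*} [NormedAddCommGroup E] [InnerProductSpace ℝ E]
    (u u' : E) : ‖u - u'‖ ^ 2 = ‖u‖ ^ 2 + ‖u'‖ ^ 2 - 2 * ⟪u, u'⟫_ℝ := by
  rw [@norm_sub_sq_real]; ring

/-- Key geometric lemma in an abstract real inner product space. -/
lemma stmt4_aux {E : Type*} [NormedAddCommGroup E] [InnerProductSpace ℝ E]
    (V W W' A B : E) (L : ℝ)
    (hV : ‖V‖ = 1) (hA : ‖A‖ = 1) (hB : ‖B‖ = 1) (hW : ‖W‖ = 1) (hW' : ‖W'‖ = 1)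
    (h1 : 1 - L ≤ ⟪V, W⟫_ℝ) (h2 : 1 - L ≤ ⟪A, W⟫_ℝ)
    (h3 : 1 - L ≤ ⟪V, W'⟫_ℝ) (h4 : 1 - L ≤ ⟪B, W'⟫_ℝ)
    (hAB : ⟪A, B⟫_ℝ = 0) : 2 - 8 * L ≤ Real.sqrt 2 := by
  have key : ∀ (u u' M : E), ‖u‖ = 1 → ‖u'‖ = 1 → 1 - L ≤ ⟪u, M⟫_ℝ → 1 - L ≤ ⟪u', M⟫_ℝ →
      ‖M‖ = 1 → 1 - 4 * L ≤ ⟪u, u'⟫_ℝ := by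
    intro u u' M hu hu' huM hu'M hM
    have e1 : ‖u - M‖ ^ 2 ≤ 2 * L := by rw [stmt4_expand, hu, hM]; nlinarith
    have e2 : ‖u' - M‖ ^ 2 ≤ 2 * L := by rw [stmt4_expand, hu', hM]; nlinarith
    have h5 : ‖u - u'‖ ≤ ‖u - M‖ + ‖u' - M‖ := by
      calc ‖u - u'‖ ≤ ‖u - M‖ + ‖M - u'‖ := norm_sub_le_norm_sub_add_norm_sub _ _ _
        _ = ‖u - M‖ + ‖u' - M‖ := by rw [norm_sub_rev M u']
    have h6 : ‖u - u'‖ ^ 2 ≤ 8 * L := by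
      nlinarith [norm_nonneg (u - u'), norm_nonneg (u - M), norm_nonneg (u' - M),
        sq_nonneg (‖u - M‖ - ‖u' - M‖)]
    have := stmt4_expand u u'
    rw [hu, hu'] at this
    nlinarith
  have kA : 1 - 4 * L ≤ ⟪V, A⟫_ℝ := key V A W hV hA h1 h2 hW
  have kB : 1 - 4 * L ≤ ⟪V, B⟫_ℝ := key V B W' hV hB h3 h4 hW'
  have hABnorm : ‖A + B‖ = Real.sqrt 2 := by
    have : ‖A + B‖ ^ 2 = 2 := by
      rw [@norm_add_sq_real, hA, hB, hAB]; ring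
    rw [← this, Real.sqrt_sq (norm_nonneg _)]
  have hCS : ⟪V, A + B⟫_ℝ ≤ Real.sqrt 2 := by
    calc ⟪V, A + B⟫_ℝ ≤ ‖V‖ * ‖A + B‖ := real_inner_le_norm _ _
      _ = Real.sqrt 2 := by rw [hV, hABnorm, one_mul]
  rw [inner_add_right] at hCS
  linarith

set_option maxHeartbeats 1000000 in
/-- If a group based game has a vect-density with expected winning value at least `1 - ε`
(for suitably small `ε`), then it has a perfect deterministic strategy. -/
theorem stmt_4 {Ω X Y H : Type*} [Group Ω] [Fintype Ω]
    [Fintype X] [Nonempty X] [Fintype Y] [Nonempty Y]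
    [NormedAddCommGroup H] [InnerProductSpace ℝ H]
    (f : X × Y → Ω)
    (π : X × Y → ℝ) (hπ : ∀ x y, 0 ≤ π (x, y))
    (hπsum : ∑ x : X, ∑ y : Y, π (x, y) = 1)
    (π₀ : ℝ) (hπ₀def : π₀ = ⨅ xy : X × Y, π xy) (hπ₀pos : 0 < π₀)
    (ε : ℝ) (hε : 0 < ε)
    (hεsmall : ε + 2 * (Fintype.card Ω : ℝ) * ε / π₀ +
      2 * Real.sqrt ((Fintype.card Ω : ℝ) * ε / π₀) < 1)
    (η : H) (hη : ‖η‖ = 1) (v : X → Ω → H) (w : Y → Ω → H)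
    (hv : ∀ (x : X) (a a' : Ω), a ≠ a' → ⟪v x a, v x a'⟫_ℝ = 0)
    (hw : ∀ (y : Y) (b b' : Ω), b ≠ b' → ⟪w y b, w y b'⟫_ℝ = 0)
    (hvsum : ∀ x : X, ∑ a : Ω, v x a = η)
    (hwsum : ∀ y : Y, ∑ b : Ω, w y b = η)
    (hpos : ∀ (x : X) (y : Y) (a b : Ω), 0 ≤ ⟪v x a, w y b⟫_ℝ)
    (hval : 1 - ε ≤ ∑ x : X, ∑ y : Y, π (x, y) * ∑ b : Ω, ⟪v x (f (x, y) * b), w y b⟫_ℝ) :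
    ∃ (hA : X → Ω) (hB : Y → Ω), ∀ (x : X) (y : Y), hA x * (hB y)⁻¹ = f (x, y) := by
  classical
  set L : ℝ := ε / π₀ with hLdef
  have hLnn : 0 ≤ L := div_nonneg hε.le hπ₀pos.le
  -- reindexing over the group
  have reindex : ∀ (c : Ω) (F : Ω → ℝ), ∑ b : Ω, F (c * b) = ∑ a : Ω, F a := by
    intro c F
    exact Equiv.sum_comp (Equiv.mulLeft c) F
  -- π₀ is a lower bound for π
  have hπ₀le : ∀ xy : X × Y, π₀ ≤ π xy := by
    intro xy
    rw [hπ₀def]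
    exact ciInf_le (Finite.bddBelow_range _) xy
  -- Pythagoras
  have hη2 : ⟪η, η⟫_ℝ = 1 := by
    rw [real_inner_self_eq_norm_sq, hη]; norm_num
  have hvnorm : ∀ x : X, ∑ a : Ω, ‖v x a‖ ^ 2 = 1 := by
    intro x
    have : ⟪η, η⟫_ℝ = ∑ a : Ω, ∑ a' : Ω, ⟪v x a, v x a'⟫_ℝ := by
      rw [← hvsum x, sum_inner]
      exact Finset.sum_congr rfl fun a _ => inner_sum _ _ _
    rw [hη2] at this
    rw [this]
    refine Finset.sum_congr rfl fun a _ => ?_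
    rw [Finset.sum_eq_single a]
    · exact (real_inner_self_eq_norm_sq _).symm
    · exact fun a' _ h => hv x a a' (Ne.symm h)
    · simp
  have hwnorm : ∀ y : Y, ∑ b : Ω, ‖w y b‖ ^ 2 = 1 := by
    intro y
    have : ⟪η, η⟫_ℝ = ∑ b : Ω, ∑ b' : Ω, ⟪w y b, w y b'⟫_ℝ := by
      rw [← hwsum y, sum_inner]
      exact Finset.sum_congr rfl fun b _ => inner_sum _ _ _
    rw [hη2] at this
    rw [this]
    refine Finset.sum_congr rfl fun b _ => ?_
    rw [Finset.sum_eq_single b]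
    · exact (real_inner_self_eq_norm_sq _).symm
    · exact fun b' _ h => hw y b b' (Ne.symm h)
    · simp
  -- winning value per pair
  set S : X → Y → ℝ := fun x y => ∑ b : Ω, ⟪v x (f (x, y) * b), w y b⟫_ℝ with hSdef
  have hS1 : ∀ x y, S x y ≤ 1 := by
    intro x y
    have htot : ∑ b : Ω, ∑ a : Ω, ⟪v x a, w y b⟫_ℝ = 1 := by
      calc ∑ b : Ω, ∑ a : Ω, ⟪v x a, w y b⟫_ℝ
          = ∑ b : Ω, ⟪η, w y b⟫_ℝ :=
            Finset.sum_congr rfl fun b _ => by rw [← hvsum x, sum_inner]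
        _ = ⟪η, η⟫_ℝ := by rw [← inner_sum, hwsum y]
        _ = 1 := hη2
    rw [← htot]
    refine Finset.sum_le_sum fun b _ => ?_
    exact Finset.single_le_sum (fun a _ => hpos x y a b) (Finset.mem_univ _)
  have hSL : ∀ x y, 1 - L ≤ S x y := by
    intro x y
    have hterm : ∀ (x' : X) (y' : Y), 0 ≤ π (x', y') * (1 - S x' y') :=
      fun x' y' => mul_nonneg (hπ x' y') (by linarith [hS1 x' y'])
    have hsum : ∑ x' : X, ∑ y' : Y, π (x', y') * (1 - S x' y') ≤ ε := by
      have e : ∑ x' : X, ∑ y' : Y, π (x', y') * (1 - S x' y')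
          = (∑ x' : X, ∑ y' : Y, π (x', y')) - ∑ x' : X, ∑ y' : Y, π (x', y') * S x' y' := by
        rw [← Finset.sum_sub_distrib]
        refine Finset.sum_congr rfl fun x' _ => ?_
        rw [← Finset.sum_sub_distrib]
        exact Finset.sum_congr rfl fun y' _ => by ring
      rw [e, hπsum]
      linarith [hval]
    have h1 : π (x, y) * (1 - S x y) ≤ ε := by
      calc π (x, y) * (1 - S x y)
          ≤ ∑ y' : Y, π (x, y') * (1 - S x y') :=
            Finset.single_le_sum (fun y' _ => hterm x y') (Finset.mem_univ _)
        _ ≤ ∑ x' : X, ∑ y' : Y, π (x', y') * (1 - S x' y') :=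
            Finset.single_le_sum
              (fun x' _ => Finset.sum_nonneg fun y' _ => hterm x' y') (Finset.mem_univ _)
        _ ≤ ε := hsum
    have h2 : π₀ * (1 - S x y) ≤ ε := by
      rcases le_or_gt (1 - S x y) 0 with h | h
      · calc π₀ * (1 - S x y) ≤ 0 := mul_nonpos_of_nonneg_of_nonpos hπ₀pos.le h
          _ ≤ ε := hε.le
      · calc π₀ * (1 - S x y) ≤ π (x, y) * (1 - S x y) :=
              mul_le_mul_of_nonneg_right (hπ₀le (x, y)) h.le
          _ ≤ ε := h1
    have h3 : 1 - S x y ≤ ε / π₀ := by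
      rw [le_div_iff₀ hπ₀pos]
      linarith [h2]
    simp only [hLdef]
    linarith
  -- consistency
  have consistency : ∀ (x x' : X) (y y' : Y),
      f (x', y) * (f (x, y))⁻¹ = f (x', y') * (f (x, y'))⁻¹ := by
    intro x x' y y'
    by_contra hne
    set g : Ω := f (x', y) * (f (x, y))⁻¹ with hg
    set g' : Ω := f (x', y') * (f (x, y'))⁻¹ with hg'
    -- card Ω ≥ 2
    have hnt : Nontrivial Ω := ⟨⟨g, g', hne⟩⟩
    have hcard2 : (2 : ℝ) ≤ (Fintype.card Ω : ℝ) := by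
      exact_mod_cast Fintype.one_lt_card
    -- work in PiLp 2
    let E := PiLp 2 (fun _ : Ω => H)
    let Vt : E := WithLp.toLp 2 (fun a => v x a)
    let A : E := WithLp.toLp 2 (fun a => v x' (g * a))
    let B : E := WithLp.toLp 2 (fun a => v x' (g' * a))
    let Wt : E := WithLp.toLp 2 (fun a => w y ((f (x, y))⁻¹ * a))
    let Wt' : E := WithLp.toLp 2 (fun a => w y' ((f (x, y'))⁻¹ * a))
    have norm1 : ∀ (z : E), (∑ a : Ω, ‖z a‖ ^ 2) = 1 → ‖z‖ = 1 := by
      intro z hz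
      have h := PiLp.norm_sq_eq_of_L2 (fun _ : Ω => H) z
      rw [hz] at h
      have := Real.sqrt_sq (norm_nonneg z)
      rw [← this, h, Real.sqrt_one]
    have hVt : ‖Vt‖ = 1 := norm1 _ (hvnorm x)
    have hA : ‖A‖ = 1 := by
      refine norm1 _ ?_
      calc ∑ a : Ω, ‖v x' (g * a)‖ ^ 2 = ∑ a : Ω, ‖v x' a‖ ^ 2 :=
            reindex g (fun a => ‖v x' a‖ ^ 2)
        _ = 1 := hvnorm x'
    have hB : ‖B‖ = 1 := by
      refine norm1 _ ?_
      calc ∑ a : Ω, ‖v x' (g' * a)‖ ^ 2 = ∑ a : Ω, ‖v x' a‖ ^ 2 :=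
            reindex g' (fun a => ‖v x' a‖ ^ 2)
        _ = 1 := hvnorm x'
    have hWt : ‖Wt‖ = 1 := by
      refine norm1 _ ?_
      calc ∑ a : Ω, ‖w y ((f (x, y))⁻¹ * a)‖ ^ 2 = ∑ a : Ω, ‖w y a‖ ^ 2 :=
            reindex (f (x, y))⁻¹ (fun a => ‖w y a‖ ^ 2)
        _ = 1 := hwnorm y
    have hWt' : ‖Wt'‖ = 1 := by
      refine norm1 _ ?_
      calc ∑ a : Ω, ‖w y' ((f (x, y'))⁻¹ * a)‖ ^ 2 = ∑ a : Ω, ‖w y' a‖ ^ 2 :=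
            reindex (f (x, y'))⁻¹ (fun a => ‖w y' a‖ ^ 2)
        _ = 1 := hwnorm y'
    have hinner : ∀ z z' : E, ⟪z, z'⟫_ℝ = ∑ a : Ω, ⟪z a, z' a⟫_ℝ := fun z z' =>
      PiLp.inner_apply z z'
    have h1 : 1 - L ≤ ⟪Vt, Wt⟫_ℝ := by
      rw [hinner]
      have : ∑ a : Ω, ⟪v x a, w y ((f (x, y))⁻¹ * a)⟫_ℝ = S x y := by
        rw [hSdef]
        rw [← reindex (f (x, y)) (fun a => ⟪v x a, w y ((f (x, y))⁻¹ * a)⟫_ℝ)]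
        simp [inv_mul_cancel_left]
      exact (hSL x y).trans_eq this.symm
    have h2 : 1 - L ≤ ⟪A, Wt⟫_ℝ := by
      rw [hinner]
      have : ∑ a : Ω, ⟪v x' (g * a), w y ((f (x, y))⁻¹ * a)⟫_ℝ = S x' y := by
        rw [hSdef]
        rw [← reindex (f (x, y)) (fun a => ⟪v x' (g * a), w y ((f (x, y))⁻¹ * a)⟫_ℝ)]
        refine Finset.sum_congr rfl fun b _ => ?_
        rw [hg]
        simp [mul_assoc, inv_mul_cancel_left]
      exact (hSL x' y).trans_eq this.symm
    have h3 : 1 - L ≤ ⟪Vt, Wt'⟫_ℝ := by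
      rw [hinner]
      have : ∑ a : Ω, ⟪v x a, w y' ((f (x, y'))⁻¹ * a)⟫_ℝ = S x y' := by
        rw [hSdef]
        rw [← reindex (f (x, y')) (fun a => ⟪v x a, w y' ((f (x, y'))⁻¹ * a)⟫_ℝ)]
        simp [inv_mul_cancel_left]
      exact (hSL x y').trans_eq this.symm
    have h4 : 1 - L ≤ ⟪B, Wt'⟫_ℝ := by
      rw [hinner]
      have : ∑ a : Ω, ⟪v x' (g' * a), w y' ((f (x, y'))⁻¹ * a)⟫_ℝ = S x' y' := by
        rw [hSdef]
        rw [← reindex (f (x, y')) (fun a => ⟪v x' (g' * a), w y' ((f (x, y'))⁻¹ * a)⟫_ℝ)]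
        refine Finset.sum_congr rfl fun b _ => ?_
        rw [hg']
        simp [mul_assoc, inv_mul_cancel_left]
      exact (hSL x' y').trans_eq this.symm
    have hAB : ⟪A, B⟫_ℝ = 0 := by
      rw [hinner]
      refine Finset.sum_eq_zero fun a _ => ?_
      refine hv x' (g * a) (g' * a) ?_
      intro hcon
      exact hne (mul_right_cancel hcon)
    have hmain : 2 - 8 * L ≤ Real.sqrt 2 :=
      stmt4_aux Vt Wt Wt' A B L hVt hA hB hWt hWt' h1 h2 h3 h4 hAB
    -- numeric contradiction
    have hdrop : 2 * (Fintype.card Ω : ℝ) * ε / π₀ +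
        2 * Real.sqrt ((Fintype.card Ω : ℝ) * ε / π₀) < 1 := by linarith
    have hmono : 2 * (2 * L) + 2 * Real.sqrt (2 * L) < 1 := by
      have e1 : 2 * (Fintype.card Ω : ℝ) * ε / π₀ = 2 * ((Fintype.card Ω : ℝ) * (ε / π₀)) := by
        field_simp
      have e2 : (Fintype.card Ω : ℝ) * ε / π₀ = (Fintype.card Ω : ℝ) * (ε / π₀) := by
        field_simp
      have hle : 2 * L ≤ (Fintype.card Ω : ℝ) * (ε / π₀) := by
        rw [hLdef]
        nlinarith [div_nonneg hε.le hπ₀pos.le]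
      have hs : Real.sqrt (2 * L) ≤ Real.sqrt ((Fintype.card Ω : ℝ) * (ε / π₀)) :=
        Real.sqrt_le_sqrt hle
      rw [e1, e2] at hdrop
      linarith
    set s : ℝ := Real.sqrt (2 * L) with hs
    have hs0 : 0 ≤ s := Real.sqrt_nonneg _
    have hs2 : s ^ 2 = 2 * L := Real.sq_sqrt (by linarith)
    have hr2 : Real.sqrt 2 ^ 2 = 2 := Real.sq_sqrt (by norm_num)
    have hr0 : 0 ≤ Real.sqrt 2 := Real.sqrt_nonneg _
    nlinarith [hmain, hmono, hs2, hr2, hs0, hr0, sq_nonneg (s - 1), sq_nonneg (Real.sqrt 2 - 3/2)]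
  -- build strategy
  obtain ⟨x₀⟩ := ‹Nonempty X›
  obtain ⟨y₀⟩ := ‹Nonempty Y›
  refine ⟨fun x => f (x, y₀), fun y => (f (x₀, y))⁻¹ * f (x₀, y₀), fun x y => ?_⟩
  have h := consistency x₀ x y y₀
  rw [mul_inv_rev, inv_inv]
  calc f (x, y₀) * ((f (x₀, y₀))⁻¹ * f (x₀, y))
      = (f (x, y₀) * (f (x₀, y₀))⁻¹) * f (x₀, y) := by rw [mul_assoc]
    _ = (f (x, y) * (f (x₀, y))⁻¹) * f (x₀, y) := by rw [h]
    _ = f (x, y) := by rw [inv_mul_cancel_right]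
end

section
/- Let Ω be a finite group, d ≥ 1, and ρ : Ω → M_d(ℂ) an injective group homomorphism such that ρ(g) is a unitary matrix for every g ∈ Ω. Let n ≥ 1 and let f : Fin n × Fin n → Ω satisfy f(x,x) = 1 for all x. Then the nd × nd block matrix whose (x,y) block is ρ(f(x,y)) is positive semidefinite if and only if there exists a function h : Fin n → Ω such that f(x,y) = h(x)·h(y)⁻¹ for all x, y. (Equivalently: a synchronous group based game has a perfect vect-strategy, i.e. a perfect deterministic strategy, if and only if f is a positive definite function.) -/
open scoped ComplexOrder
open Matrix in
/-- A synchronous group based game has a perfect (synchronous) deterministic strategy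
if and only if the rule function `f` is positive definite, i.e. the block matrix
`(ρ(f(x,y)))_{x,y}` is positive semidefinite for a faithful unitary representation `ρ`. -/
theorem stmt_5 {Ω : Type*} [Group Ω] [Fintype Ω] (d : ℕ) (hd : 1 ≤ d)
    (ρ : Ω →* Matrix (Fin d) (Fin d) ℂ)
    (hρinj : Function.Injective ρ)
    (hρunitary : ∀ g : Ω, ρ g ∈ Matrix.unitaryGroup (Fin d) ℂ)
    (n : ℕ) (hn : 1 ≤ n)
    (f : Fin n × Fin n → Ω) (hf : ∀ x, f (x, x) = 1) :
    (Matrix.of fun p q : Fin n × Fin d => ρ (f (p.1, q.1)) p.2 q.2).PosSemidef ↔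
      ∃ h : Fin n → Ω, ∀ x y : Fin n, f (x, y) = h x * (h y)⁻¹ := by
  have hstar : ∀ g : Ω, (ρ g)ᴴ = ρ g⁻¹ := by
    intro g
    have h1 : (ρ g)ᴴ * ρ g = 1 := Matrix.mem_unitaryGroup_iff'.mp (hρunitary g)
    calc (ρ g)ᴴ = (ρ g)ᴴ * (ρ g * ρ g⁻¹) := by
          rw [← _root_.map_mul, mul_inv_cancel, _root_.map_one, mul_one]
      _ = ((ρ g)ᴴ * ρ g) * ρ g⁻¹ := by rw [mul_assoc]
      _ = ρ g⁻¹ := by rw [h1, one_mul]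
  constructor
  · intro hM
    obtain ⟨A, hA⟩ : ∃ B : Matrix (Fin n × Fin d) (Fin n × Fin d) ℂ,
        (Matrix.of fun p q : Fin n × Fin d => ρ (f (p.1, q.1)) p.2 q.2) = Bᴴ * B := by
      open scoped MatrixOrder in
      obtain ⟨B, hB⟩ := CStarAlgebra.nonneg_iff_eq_star_mul_self.mp hM.nonneg
      exact ⟨B, hB⟩
    set V : Fin n → Matrix (Fin n × Fin d) (Fin d) ℂ :=
      fun x => Matrix.of fun k j => A k (x, j) with hV
    have hgram : ∀ x y : Fin n, (V x)ᴴ * V y = ρ (f (x, y)) := by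
      intro x y
      ext i j
      have := congrFun (congrFun hA (x, i)) (y, j)
      simp only [Matrix.of_apply] at this
      rw [this]
      simp [Matrix.mul_apply, Matrix.conjTranspose_apply, hV]
    set z : Fin n := ⟨0, hn⟩ with hz
    have hVx : ∀ x : Fin n, V x = V z * ρ (f (z, x)) := by
      intro x
      have hU : (ρ (f (z, x)))ᴴ * ρ (f (z, x)) = 1 := by
        rw [hstar, ← _root_.map_mul, inv_mul_cancel, _root_.map_one]
      have hxz : (V x)ᴴ * V z = (ρ (f (z, x)))ᴴ := by
        rw [← hgram z x, Matrix.conjTranspose_mul, Matrix.conjTranspose_conjTranspose]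
      have e1 : (V x)ᴴ * V x = 1 := by rw [hgram, hf, _root_.map_one]
      have e2 : (V x)ᴴ * (V z * ρ (f (z, x))) = 1 := by
        rw [← Matrix.mul_assoc, hxz, hU]
      have e3 : (ρ (f (z, x)))ᴴ * (V z)ᴴ * V x = 1 := by
        rw [Matrix.mul_assoc, hgram, hU]
      have e4 : (ρ (f (z, x)))ᴴ * (V z)ᴴ * (V z * ρ (f (z, x))) = 1 := by
        rw [Matrix.mul_assoc, ← Matrix.mul_assoc ((V z)ᴴ), hgram z z, hf z, _root_.map_one,
          Matrix.one_mul, hU]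
      have hzero : (V x - V z * ρ (f (z, x)))ᴴ * (V x - V z * ρ (f (z, x))) = 0 := by
        rw [Matrix.conjTranspose_sub, Matrix.conjTranspose_mul, Matrix.sub_mul,
          Matrix.mul_sub, Matrix.mul_sub, e1, e2, e3, e4]
        simp
      exact sub_eq_zero.mp (Matrix.conjTranspose_mul_self_eq_zero.mp hzero)
    refine ⟨fun x => (f (z, x))⁻¹, fun x y => ?_⟩
    apply hρinj
    have hxy : ρ (f (x, y)) = (V x)ᴴ * V y := (hgram x y).symm
    rw [hxy, hVx x, hVx y, Matrix.conjTranspose_mul, Matrix.mul_assoc,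
      ← Matrix.mul_assoc ((V z)ᴴ), hgram z z, hf z, _root_.map_one, Matrix.one_mul, hstar,
      ← _root_.map_mul]
    simp
  · rintro ⟨h, hh⟩
    have key : (Matrix.of fun p q : Fin n × Fin d => ρ (f (p.1, q.1)) p.2 q.2) =
        (Matrix.of fun (k : Fin d) (q : Fin n × Fin d) => ρ ((h q.1)⁻¹) k q.2)ᴴ *
        (Matrix.of fun (k : Fin d) (q : Fin n × Fin d) => ρ ((h q.1)⁻¹) k q.2) := by
      ext p q
      have hρ : ρ (f (p.1, q.1)) = (ρ ((h p.1)⁻¹))ᴴ * ρ ((h q.1)⁻¹) := by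
        rw [hstar, inv_inv, ← _root_.map_mul, ← hh]
      simp only [Matrix.of_apply, hρ, Matrix.mul_apply, Matrix.conjTranspose_apply]
    rw [key]
    exact Matrix.posSemidef_conjTranspose_mul_self _
end

section
/- Let A be a unital associative ℂ-algebra with involution * and let τ : A → ℂ be a linear functional with τ(1) = 1, τ(uv) = τ(vu) for all u,v ∈ A, and τ(u*) = conj(τ(u)) for all u ∈ A. Let X be a finite set and D ⊆ X × X a nonempty set with (x,x) ∉ D for all x and (x,y) ∈ D ⟹ (y,x) ∉ D. For each x ∈ X let (e_{x,a})_{a∈ℤ₃} be a family in A with e_{x,a}* = e_{x,a}, e_{x,a}·e_{x,a'} = 0 for a ≠ a', and Σ_{a∈ℤ₃} e_{x,a} = 1. Let ξ = e^{2πi/3} and U_x = e_{x,0} + ξ·e_{x,1} + ξ²·e_{x,2}. Then (1/(2|D|)) Σ_{(x,y)∈D} Σ_{a∈ℤ₃} [τ(e_{x,a}·e_{y,a+1}) + τ(e_{y,a+1}·e_{x,a})] = 1/3 + (2/(3|D|)) Σ_{(x,y)∈D} Re τ(ξ²·U_x*·U_y). (The left-hand side is the expected winning value of the synchronous density p(a,b|x,y)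 = τ(e_{x,a}e_{y,b}) for the directed graph game of (X,D) with uniform input density on edges.) -/
lemma edge_lemma {A : Type*} [Ring A] [Algebra ℂ A] [StarRing A]
    (τ : A →ₗ[ℂ] ℂ) (hτ1 : τ 1 = 1)
    (hτtr : ∀ u v : A, τ (u * v) = τ (v * u))
    (hτstar : ∀ u : A, τ (star u) = starRingEnd ℂ (τ u))
    (ex ey : ZMod 3 → A)
    (hexstar : ∀ a, star (ex a) = ex a) (heystar : ∀ a, star (ey a) = ey a)
    (hexsum : ∑ a : ZMod 3, ex a = 1) (heysum : ∑ a : ZMod 3, ey a = 1)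
    (ξ : ℂ) (hξ3 : ξ^3 = 1) (hξsum : 1 + ξ + ξ^2 = 0) (hconj : starRingEnd ℂ ξ = ξ^2)
    (Ux Uy : A) (hUx : Ux = ex 0 + ξ • ex 1 + ξ^2 • ex 2)
    (hUy : Uy = ey 0 + ξ • ey 1 + ξ^2 • ey 2) :
    (((ξ^2 * τ (star Ux * Uy)).re : ℝ) : ℂ)
      = (3 * (∑ a : ZMod 3, τ (ex a * ey (a+1))) - 1) / 2 := by
  have hsum3C : ∀ f : ZMod 3 → ℂ, ∑ a : ZMod 3, f a = f 0 + f 1 + f 2 := fun f => by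
    show ∑ a : Fin 3, f a = _; exact Fin.sum_univ_three f
  have hsum3A : ∀ f : ZMod 3 → A, ∑ a : ZMod 3, f a = f 0 + f 1 + f 2 := fun f => by
    show ∑ a : Fin 3, f a = _; exact Fin.sum_univ_three f
  have hconj2 : starRingEnd ℂ (ξ^2) = ξ := by
    rw [map_pow, hconj]; linear_combination ξ * hξ3
  -- symmetry / reality of the correlations
  have hsym : ∀ a b, starRingEnd ℂ (τ (ex a * ey b)) = τ (ex a * ey b) := by
    intro a b
    rw [← hτstar, star_mul, hexstar, heystar, hτtr]
  -- expansion of τ (star Ux * w) for w not involving star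
  have hstep : ∀ b, τ (star Ux * ey b)
      = τ (ex 0 * ey b) + ξ^2 * τ (ex 1 * ey b) + ξ * τ (ex 2 * ey b) := by
    intro b
    have h1 : star Ux * ey b = star (ey b * Ux) := by
      rw [star_mul, heystar]
    rw [h1, hτstar, hτtr, hUx]
    simp only [mul_add, add_mul, smul_mul_assoc, mul_smul_comm, map_add, map_smul,
      smul_eq_mul, map_mul, hsym, hconj, hconj2]
  have hstepy : ∀ a, τ (star Uy * ex a)
      = τ (ex a * ey 0) + ξ^2 * τ (ex a * ey 1) + ξ * τ (ex a * ey 2) := by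
    intro a
    have h1 : star Uy * ex a = star (ex a * Uy) := by
      rw [star_mul, hexstar]
    rw [h1, hτstar, hτtr, hUy]
    simp only [mul_add, add_mul, smul_mul_assoc, mul_smul_comm, map_add, map_smul,
      smul_eq_mul, map_mul, hsym, hconj, hconj2, hτtr (ey 0), hτtr (ey 1), hτtr (ey 2)]
  have hexp : τ (star Ux * Uy)
      = τ (ex 0 * ey 0) + ξ * τ (ex 0 * ey 1) + ξ^2 * τ (ex 0 * ey 2)
      + ξ^2 * τ (ex 1 * ey 0) + ξ^3 * τ (ex 1 * ey 1) + ξ^4 * τ (ex 1 * ey 2)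
      + ξ * τ (ex 2 * ey 0) + ξ^2 * τ (ex 2 * ey 1) + ξ^3 * τ (ex 2 * ey 2) := by
    rw [hUy]
    simp only [mul_add, mul_smul_comm, map_add, map_smul, smul_eq_mul]
    rw [hstep 0, hstep 1, hstep 2]
    ring
  have hexp2 : τ (star Uy * Ux)
      = τ (ex 0 * ey 0) + ξ^2 * τ (ex 0 * ey 1) + ξ * τ (ex 0 * ey 2)
      + ξ * τ (ex 1 * ey 0) + ξ^3 * τ (ex 1 * ey 1) + ξ^2 * τ (ex 1 * ey 2)
      + ξ^2 * τ (ex 2 * ey 0) + ξ^4 * τ (ex 2 * ey 1) + ξ^3 * τ (ex 2 * ey 2) := by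
    rw [hUx]
    simp only [mul_add, mul_smul_comm, map_add, map_smul, smul_eq_mul]
    rw [hstepy 0, hstepy 1, hstepy 2]
    ring
  have hx1 : ex 0 + ex 1 + ex 2 = 1 := by rw [← hsum3A]; exact hexsum
  have hy1 : ey 0 + ey 1 + ey 2 = 1 := by rw [← hsum3A]; exact heysum
  have htot : τ (ex 0 * ey 0) + τ (ex 0 * ey 1) + τ (ex 0 * ey 2)
      + τ (ex 1 * ey 0) + τ (ex 1 * ey 1) + τ (ex 1 * ey 2)
      + τ (ex 2 * ey 0) + τ (ex 2 * ey 1) + τ (ex 2 * ey 2) = 1 := by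
    have h : (ex 0 + ex 1 + ex 2) * (ey 0 + ey 1 + ey 2) = 1 := by rw [hx1, hy1, one_mul]
    have h := congrArg τ h
    rw [hτ1] at h
    rw [← h]
    simp only [mul_add, add_mul, map_add]
    ring
  have hc : starRingEnd ℂ (ξ^2 * τ (star Ux * Uy)) = ξ * τ (star Uy * Ux) := by
    rw [map_mul, hconj2, ← hτstar, star_mul, star_star]
  have hre : (((ξ^2 * τ (star Ux * Uy)).re : ℝ) : ℂ)
      = (ξ^2 * τ (star Ux * Uy) + starRingEnd ℂ (ξ^2 * τ (star Ux * Uy))) / 2 := by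
    rw [Complex.add_conj]; push_cast; ring
  rw [hre, hc, hsum3C]
  have e01 : (0 + 1 : ZMod 3) = 1 := by decide
  have e12 : (1 + 1 : ZMod 3) = 2 := by decide
  have e20 : (2 + 1 : ZMod 3) = 0 := by decide
  rw [e01, e12, e20, hexp, hexp2]
  linear_combination
    (1/2) * (τ (ex 0 * ey 0) + τ (ex 0 * ey 2) + τ (ex 1 * ey 0) + τ (ex 1 * ey 1)
      + τ (ex 2 * ey 1) + τ (ex 2 * ey 2)) * hξsum
    + (1/2) * (2 * τ (ex 0 * ey 1) + ξ * τ (ex 0 * ey 2) + ξ * τ (ex 1 * ey 0)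
      + (ξ^2 + ξ) * τ (ex 1 * ey 1) + (ξ^3 + 2) * τ (ex 1 * ey 2)
      + 2 * τ (ex 2 * ey 0) + (ξ + ξ^2) * τ (ex 2 * ey 1)
      + (ξ^2 + ξ) * τ (ex 2 * ey 2)) * hξ3
    - (1/2) * htot

/-- The expected winning value of the synchronous density `p(a,b|x,y) = τ(e_{x,a} e_{y,b})`
for the directed graph game of `(X, D)` with the uniform density on edges equals
`1/3 + (2/(3|D|)) Σ_{(x,y) ∈ D} Re τ(ξ² U_x* U_y)`. -/
theorem stmt_6 {X : Type*} [Fintype X] {A : Type*} [Ring A] [Algebra ℂ A] [StarRing A]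
    (τ : A →ₗ[ℂ] ℂ) (hτ1 : τ 1 = 1)
    (hτtr : ∀ u v : A, τ (u * v) = τ (v * u))
    (hτstar : ∀ u : A, τ (star u) = starRingEnd ℂ (τ u))
    (D : Finset (X × X)) (hDne : D.Nonempty)
    (hD1 : ∀ x : X, (x, x) ∉ D)
    (hD2 : ∀ x y : X, (x, y) ∈ D → (y, x) ∉ D)
    (e : X → ZMod 3 → A)
    (hestar : ∀ x a, star (e x a) = e x a)
    (heorth : ∀ x a a', a ≠ a' → e x a * e x a' = 0)
    (hesum : ∀ x, ∑ a : ZMod 3, e x a = 1)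
    (ξ : ℂ) (hξ : ξ = Complex.exp (2 * Real.pi * Complex.I / 3))
    (U : X → A) (hU : ∀ x, U x = e x 0 + ξ • e x 1 + ξ ^ 2 • e x 2) :
    (1 / (2 * (D.card : ℂ))) *
        ∑ p ∈ D, ∑ a : ZMod 3,
          (τ (e p.1 a * e p.2 (a + 1)) + τ (e p.2 (a + 1) * e p.1 a)) =
      1 / 3 + (2 / (3 * (D.card : ℂ))) *
        ((∑ p ∈ D, (ξ ^ 2 * τ (star (U p.1) * U p.2)).re : ℝ) : ℂ) := by
  -- facts about ξ
  have hprim : IsPrimitiveRoot ξ 3 := hξ ▸ Complex.isPrimitiveRoot_exp 3 (by norm_num)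
  have hξ3 : ξ ^ 3 = 1 := hprim.pow_eq_one
  have hne : ξ ≠ 1 := hprim.ne_one (by norm_num)
  have hne0 : ξ ≠ 0 := hprim.ne_zero (by norm_num)
  have hξsum : 1 + ξ + ξ ^ 2 = 0 := by
    rcases mul_eq_zero.mp (show (ξ - 1) * (1 + ξ + ξ ^ 2) = 0 by linear_combination hξ3) with
      h | h
    · exact absurd (sub_eq_zero.mp h) hne
    · exact h
  have hconj : starRingEnd ℂ ξ = ξ ^ 2 := by
    have habs : ξ * starRingEnd ℂ ξ = 1 := by
      rw [Complex.mul_conj]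
      norm_cast
      rw [Complex.normSq_eq_norm_sq, hξ, Complex.norm_exp]
      simp [Complex.div_re, Complex.mul_re]
    have h2 : ξ * starRingEnd ℂ ξ = ξ * ξ ^ 2 := by rw [habs, ← hξ3]; ring
    exact mul_left_cancel₀ hne0 h2
  have hd : (D.card : ℂ) ≠ 0 := by
    exact_mod_cast Nat.cast_ne_zero.mpr (Finset.card_ne_zero_of_mem hDne.choose_spec)
  -- left-hand inner sums
  have hL : ∀ p ∈ D, (∑ a : ZMod 3,
        (τ (e p.1 a * e p.2 (a + 1)) + τ (e p.2 (a + 1) * e p.1 a)))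
      = 2 * ∑ a : ZMod 3, τ (e p.1 a * e p.2 (a + 1)) := by
    intro p _
    rw [Finset.mul_sum]
    refine Finset.sum_congr rfl fun a _ => ?_
    rw [hτtr (e p.2 (a+1)) (e p.1 a)]; ring
  -- right-hand terms via the edge lemma
  have hR : ∀ p ∈ D, (((ξ ^ 2 * τ (star (U p.1) * U p.2)).re : ℝ) : ℂ)
      = (3 * (∑ a : ZMod 3, τ (e p.1 a * e p.2 (a + 1))) - 1) / 2 := fun p _ =>
    edge_lemma τ hτ1 hτtr hτstar (e p.1) (e p.2) (hestar p.1) (hestar p.2)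
      (hesum p.1) (hesum p.2) ξ hξ3 hξsum hconj (U p.1) (U p.2) (hU p.1) (hU p.2)
  rw [Finset.sum_congr rfl hL]
  push_cast
  rw [Finset.sum_congr rfl hR]
  rw [← Finset.mul_sum, ← Finset.sum_div, Finset.sum_sub_distrib, ← Finset.mul_sum,
    Finset.sum_const, nsmul_eq_mul, mul_one]
  field_simp
  ring
end

section
/- Let (X,D) be a directed graph: X a finite set, D ⊆ X × X with (x,x) ∉ D for all x and (x,y) ∈ D ⟹ (y,x) ∉ D. Then the following are equivalent: (i) there exist functions v, w : X → ℤ₃ such that for every (x,y) ∈ D one has w(y) = v(x) + 1 and v(y) = w(x) + 1 (a perfect deterministic strategy for the directed graph game); (ii) there exists a single function c : X → ℤ₃ such that c(y) = c(x) + 1 for every (x,y) ∈ D (a perfect synchronous deterministic strategy, i.e. a vertex 3-labelling). -/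
/-- A directed graph game has a perfect deterministic strategy if and only if it has a
perfect synchronous deterministic strategy (a vertex 3-labelling). -/
theorem stmt_8 {X : Type*} [Fintype X] (D : Set (X × X))
    (hD1 : ∀ x : X, (x, x) ∉ D)
    (hD2 : ∀ x y : X, (x, y) ∈ D → (y, x) ∉ D) :
    (∃ v w : X → ZMod 3, ∀ x y : X, (x, y) ∈ D → w y = v x + 1 ∧ v y = w x + 1) ↔
      ∃ c : X → ZMod 3, ∀ x y : X, (x, y) ∈ D → c y = c x + 1 := by
  constructor
  · rintro ⟨v, w, h⟩
    refine ⟨fun x => 2 * (v x + w x), fun x y hxy => ?_⟩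
    obtain ⟨h1, h2⟩ := h x y hxy
    simp only
    have h3 : (3 : ZMod 3) = 0 := rfl
    linear_combination 2 * h1 + 2 * h2 + h3
  · rintro ⟨c, h⟩
    exact ⟨c, c, fun x y hxy => ⟨h x y hxy, h x y hxy⟩⟩
end

section
/- Let (X,D) be a directed graph: X a finite set, D ⊆ X × X with (x,x) ∉ D for all x and (x,y) ∈ D ⟹ (y,x) ∉ D. Then there exists a function c : X → ℤ₃ with c(y) = c(x) + 1 for every (x,y) ∈ D (a vertex 3-labelling) if and only if the net length of every cycle in (X,D) is divisible by 3; here a cycle is a tuple (x_1, …, x_m) of distinct vertices with m ≥ 3 such that for each i (indices taken mod m, so x_{m+1} = x_1) either (x_i, x_{i+1}) ∈ D or (x_{i+1}, x_i) ∈ D, and its net length is |{i : (x_i,x_{i+1}) ∈ D}| − |{i : (x_{i+1},x_i) ∈ D}|. -/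
open SimpleGraph

section aux
variable {X : Type*} {D : Set (X × X)}

private def auxG (D : Set (X × X)) : SimpleGraph X where
  Adj a b := a ≠ b ∧ ((a, b) ∈ D ∨ (b, a) ∈ D)
  symm := by constructor; intro a b ⟨h1, h2⟩; exact ⟨h1.symm, h2.symm⟩
  loopless := by constructor; intro a ⟨h1, _⟩; exact h1 rfl

open Classical in
private noncomputable def wt (D : Set (X × X)) {a b : X} (p : (auxG D).Walk a b) : ℤ :=
  (p.darts.map fun d => if (d.toProd.1, d.toProd.2) ∈ D then (1 : ℤ) else -1).sum

@[simp] private lemma wt_nil {a : X} : wt D (SimpleGraph.Walk.nil : (auxG D).Walk a a) = 0 := by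
  simp [wt]

open Classical in
@[simp] private lemma wt_cons {a b c : X} (h : (auxG D).Adj a b) (p : (auxG D).Walk b c) :
    wt D (SimpleGraph.Walk.cons h p) = (if (a, b) ∈ D then (1:ℤ) else -1) + wt D p := by
  simp [wt]

@[simp] private lemma wt_append {a b c : X} (p : (auxG D).Walk a b) (q : (auxG D).Walk b c) :
    wt D (p.append q) = wt D p + wt D q := by
  simp [wt, SimpleGraph.Walk.darts_append]

@[simp] private lemma wt_copy {a b a' b' : X} (p : (auxG D).Walk a b) (h1 : a = a') (h2 : b = b') :
    wt D (p.copy h1 h2) = wt D p := by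
  subst h1; subst h2; rfl

open Classical in
private lemma wt_rotate {a b : X} (p : (auxG D).Walk a a) (h : b ∈ p.support) :
    wt D (p.rotate b h) = wt D p := by
  unfold wt
  exact List.Perm.sum_eq (List.Perm.map _ (p.rotate_darts _ h).perm)

private lemma one_dir (hD2 : ∀ x y : X, (x, y) ∈ D → (y, x) ∉ D) {a b : X}
    (h : (auxG D).Adj a b) :
    ((a, b) ∈ D ∧ (b, a) ∉ D) ∨ ((b, a) ∈ D ∧ (a, b) ∉ D) := by
  rcases h.2 with h' | h'
  · exact Or.inl ⟨h', hD2 _ _ h'⟩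
  · exact Or.inr ⟨h', hD2 _ _ h'⟩

private lemma wt_reverse (hD2 : ∀ x y : X, (x, y) ∈ D → (y, x) ∉ D) {a b : X}
    (p : (auxG D).Walk a b) : wt D p.reverse = - wt D p := by
  induction p with
  | nil => simp
  | cons h q ih =>
    rw [SimpleGraph.Walk.reverse_cons, wt_append, ih, wt_cons, wt_nil]
    rcases one_dir hD2 h with ⟨h1, h2⟩ | ⟨h1, h2⟩ <;> simp [h1, h2]

private lemma wt_eq_zero_of_length_zero {a b : X} (p : (auxG D).Walk a b) (h : p.length = 0) :
    wt D p = 0 := by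
  have : p.darts = [] := List.length_eq_zero_iff.mp (by rw [p.length_darts, h])
  simp [wt, this]

private lemma getElem_congr' {α : Type*} (l : List α) {i j : ℕ} (h : i = j) (hi : i < l.length) :
    l[i]'hi = l[j]'(h ▸ hi) := by subst h; rfl

open Classical in
private lemma cycle_sum
    (hD2 : ∀ x y : X, (x, y) ∈ D → (y, x) ∉ D)
    (hyp : ∀ (m : ℕ), 3 ≤ m → ∀ x : ZMod m → X, Function.Injective x →
        (∀ i : ZMod m, (x i, x (i + 1)) ∈ D ∨ (x (i + 1), x i) ∈ D) →
        (3 : ℤ) ∣ ((Set.ncard {i : ZMod m | (x i, x (i + 1)) ∈ D} : ℤ) -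
          (Set.ncard {i : ZMod m | (x (i + 1), x i) ∈ D} : ℤ)))
    (m : ℕ) (hm : 3 ≤ m) (s : List X) (hslen : s.length = m + 1)
    (hnd : s.tail.Nodup)
    (hcl : s[m]'(by omega) = s[0]'(by omega))
    (hadj : ∀ (k : ℕ) (hk : k < m),
      (s[k]'(by omega), s[k+1]'(by omega)) ∈ D ∨ (s[k+1]'(by omega), s[k]'(by omega)) ∈ D) :
    (3:ℤ) ∣ ∑ k : Fin m, (if (s[k.1]'(by have := k.2; omega), s[k.1+1]'(by have := k.2; omega)) ∈ D
      then (1:ℤ) else -1) := by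
  haveI : NeZero m := ⟨by omega⟩
  have htlen : s.tail.length = m := by rw [List.length_tail]; omega
  set f : ZMod m → X := fun i => s.tail[i.val]'(by rw [htlen]; exact i.val_lt) with hf
  have hft : ∀ i : ZMod m, f i = s[i.val + 1]'(by have := i.val_lt; omega) := by
    intro i; rw [hf]; exact List.getElem_tail ..
  have hinj : Function.Injective f := by
    intro i j hij
    rw [hf] at hij
    have := (List.nodup_iff_injective_getElem.mp hnd)
      (a₁ := ⟨i.val, by rw [htlen]; exact i.val_lt⟩) (a₂ := ⟨j.val, by rw [htlen]; exact j.val_lt⟩)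
      (by simpa using hij)
    exact ZMod.val_injective m (by simpa using this)
  have hfval : ∀ (k : ℕ) (hk : k < m), f (k : ZMod m) = s[k+1]'(by omega) := by
    intro k hk
    rw [hft]
    exact getElem_congr' s (by rw [ZMod.val_cast_of_lt hk]) _
  have hek : ∀ (k : ℕ) (hk : k < m), f ((k:ZMod m) - 1) = s[k]'(by omega) := by
    intro k hk
    rcases Nat.eq_zero_or_pos k with rfl | hk1
    · have h1 : ((0:ℕ) : ZMod m) - 1 = ((m-1 : ℕ) : ZMod m) := by
        have : ((m : ℕ) : ZMod m) = 0 := ZMod.natCast_self m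
        rw [Nat.cast_sub (by omega : 1 ≤ m), this]; simp
      rw [h1, hft, getElem_congr' s (show ((m-1:ℕ) : ZMod m).val + 1 = m by
        rw [ZMod.val_cast_of_lt (by omega : m - 1 < m)]; omega) _]
      exact hcl
    · have h1 : (k : ZMod m) - 1 = ((k-1 : ℕ) : ZMod m) := by
        rw [Nat.cast_sub (by omega : 1 ≤ k)]; simp
      rw [h1, hft]
      exact getElem_congr' s (show ((k-1:ℕ) : ZMod m).val + 1 = k by
        rw [ZMod.val_cast_of_lt (by omega : k - 1 < m)]; omega) _
  have hsur : ∀ i : ZMod m, ((i+1).val : ZMod m) - 1 = i := by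
    intro i
    have : (((i+1).val : ℕ) : ZMod m) = i + 1 := ZMod.natCast_rightInverse (i+1)
    rw [this]; ring
  have hadjZ : ∀ i : ZMod m, (f i, f (i + 1)) ∈ D ∨ (f (i + 1), f i) ∈ D := by
    intro i
    obtain ⟨k, hk, hik⟩ : ∃ k, ∃ hk : k < m, i = (k : ZMod m) - 1 :=
      ⟨(i+1).val, (i+1).val_lt, (hsur i).symm⟩
    have h1 : f i = s[k]'(by omega) := by rw [hik]; exact hek k hk
    have h2 : f (i + 1) = s[k+1]'(by omega) := by
      rw [hik, sub_add_cancel]; exact hfval k hk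
    rw [h1, h2]; exact hadj k hk
  have hmain := hyp m hm f hinj hadjZ
  have hsum : (∑ k : Fin m, (if (s[k.1]'(by have := k.2; omega), s[k.1+1]'(by have := k.2; omega)) ∈ D
      then (1:ℤ) else -1)) = ∑ i : ZMod m, (if (f i, f (i+1)) ∈ D then (1:ℤ) else -1) := by
    apply Finset.sum_nbij' (i := fun k : Fin m => (k.1 : ZMod m) - 1)
      (j := fun i : ZMod m => (⟨(i+1).val, (i+1).val_lt⟩ : Fin m))
    · intro k _; exact Finset.mem_univ _
    · intro i _; exact Finset.mem_univ _
    · intro k _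
      apply Fin.ext
      show ((k.1 : ZMod m) - 1 + 1).val = k.1
      rw [sub_add_cancel, ZMod.val_cast_of_lt k.2]
    · intro i _; exact hsur i
    · intro k _
      have h1 : f ((k.1 : ZMod m) - 1) = s[k.1]'(by have := k.2; omega) := hek k.1 k.2
      have h2 : f ((k.1 : ZMod m) - 1 + 1) = s[k.1+1]'(by have := k.2; omega) := by
        rw [sub_add_cancel]; exact hfval k.1 k.2
      rw [h1, h2]
  rw [hsum]
  have hsplit : ∑ i : ZMod m, (if (f i, f (i+1)) ∈ D then (1:ℤ) else -1) =
      (∑ i : ZMod m, (if (f i, f (i+1)) ∈ D then (1:ℤ) else 0)) -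
      (∑ i : ZMod m, (if (f (i+1), f i) ∈ D then (1:ℤ) else 0)) := by
    rw [← Finset.sum_sub_distrib]
    apply Finset.sum_congr rfl
    intro i _
    by_cases hP : (f i, f (i+1)) ∈ D
    · simp [hP, hD2 _ _ hP]
    · have hQ := (hadjZ i).resolve_left hP
      simp [hP, hQ]
  have hA : (∑ i : ZMod m, (if (f i, f (i+1)) ∈ D then (1:ℤ) else 0)) =
      (Set.ncard {i : ZMod m | (f i, f (i + 1)) ∈ D} : ℤ) := by
    rw [Set.ncard_eq_toFinset_card', Set.toFinset_setOf, Finset.sum_boole]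
  have hB : (∑ i : ZMod m, (if (f (i+1), f i) ∈ D then (1:ℤ) else 0)) =
      (Set.ncard {i : ZMod m | (f (i + 1), f i) ∈ D} : ℤ) := by
    rw [Set.ncard_eq_toFinset_card', Set.toFinset_setOf, Finset.sum_boole]
  rw [hsplit, hA, hB]
  exact hmain

open Classical in
private lemma nodup_case
    (hD2 : ∀ x y : X, (x, y) ∈ D → (y, x) ∉ D)
    (hyp : ∀ (m : ℕ), 3 ≤ m → ∀ x : ZMod m → X, Function.Injective x →
        (∀ i : ZMod m, (x i, x (i + 1)) ∈ D ∨ (x (i + 1), x i) ∈ D) →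
        (3 : ℤ) ∣ ((Set.ncard {i : ZMod m | (x i, x (i + 1)) ∈ D} : ℤ) -
          (Set.ncard {i : ZMod m | (x (i + 1), x i) ∈ D} : ℤ)))
    {a : X} (p : (auxG D).Walk a a) (hm : 3 ≤ p.length) (hnd : p.support.tail.Nodup) :
    (3:ℤ) ∣ wt D p := by
  have hdl : p.darts.length = p.length := p.length_darts
  have hslen : p.support.length = p.darts.length + 1 := by rw [hdl]; exact p.length_support
  have hfst : ∀ (k:ℕ) (hk : k < p.darts.length),
      (p.darts[k]'hk).toProd.1 = p.support[k]'(by omega) := by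
    intro k hk
    have h1 := List.getElem_of_eq p.map_fst_darts (i := k) (by simpa using hk)
    rw [List.getElem_map] at h1
    rw [h1, List.getElem_dropLast]
  have hsnd : ∀ (k:ℕ) (hk : k < p.darts.length),
      (p.darts[k]'hk).toProd.2 = p.support[k+1]'(by omega) := by
    intro k hk
    have h1 := List.getElem_of_eq p.map_snd_darts (i := k) (by simpa using hk)
    rw [List.getElem_map] at h1
    rw [h1, List.getElem_tail]
  have hw : wt D p = ∑ i : Fin p.darts.length,
      (if (p.support[i.1]'(by have := i.2; omega), p.support[i.1+1]'(by have := i.2; omega)) ∈ D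
       then (1:ℤ) else -1) := by
    rw [wt, ← List.ofFn_getElem_eq_map, List.sum_ofFn]
    apply Finset.sum_congr rfl
    intro i _
    rw [hfst i.1 i.2, hsnd i.1 i.2]
  rw [hw]
  have hm' : 3 ≤ p.darts.length := by omega
  apply cycle_sum hD2 hyp p.darts.length hm' p.support hslen hnd
  · have h1 := p.getLast_support
    rw [List.getLast_eq_getElem] at h1
    have h2 : p.support[0]'(by omega) = a := by
      rw [List.getElem_zero]; exact p.head_support
    rw [h2, getElem_congr' p.support (show p.darts.length = p.support.length - 1 by omega)]
    exact h1
  · intro k hk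
    have := List.isChain_iff_getElem.mp p.isChain_adj_support k (by omega)
    exact this.2

open Classical in
private lemma split_walk {u : X} (p : (auxG D).Walk u u) (hc : 2 ≤ p.support.tail.count u) :
    ∃ (q1 q2 : (auxG D).Walk u u), wt D p = wt D q1 + wt D q2 ∧
      q1.length < p.length ∧ q2.length < p.length := by
  cases p with
  | nil => simp at hc
  | @cons _ v _ h q =>
    have hq : (SimpleGraph.Walk.cons h q).support.tail = q.support := by simp
    rw [hq] at hc
    have huq : u ∈ q.support := by
      rw [← List.count_pos_iff]; omega
    have hlen : (q.takeUntil u huq).length + (q.dropUntil u huq).length = q.length := by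
      have := congrArg SimpleGraph.Walk.length (q.take_spec huq)
      rwa [SimpleGraph.Walk.length_append] at this
    have hpos : 0 < (q.dropUntil u huq).length := by
      by_contra h0
      push_neg at h0
      have h0' : (q.dropUntil u huq).length = 0 := by omega
      have hsup : (q.dropUntil u huq).support = [u] := by
        have h3 := (q.dropUntil u huq).support_eq_cons
        have h4 : (q.dropUntil u huq).support.length = 1 := by
          rw [(q.dropUntil u huq).length_support, h0']
        have h5 : (q.dropUntil u huq).support.tail = [] := by
          rw [h3] at h4
          simpa using List.length_eq_zero_iff.mp (by simpa using h4)
        rw [h3, h5]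
      have h2 : q.support = (q.takeUntil u huq).support := by
        conv_lhs => rw [← q.take_spec huq]
        rw [SimpleGraph.Walk.support_append, hsup]
        simp
      rw [h2] at hc
      have := q.count_support_takeUntil_eq_one huq
      omega
    refine ⟨SimpleGraph.Walk.cons h (q.takeUntil u huq), q.dropUntil u huq, ?_, ?_, ?_⟩
    · have h1 : wt D q = wt D (q.takeUntil u huq) + wt D (q.dropUntil u huq) := by
        conv_lhs => rw [← q.take_spec huq]
        exact wt_append _ _
      rw [wt_cons, wt_cons, h1]; ring
    · rw [SimpleGraph.Walk.length_cons, SimpleGraph.Walk.length_cons]; omega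
    · rw [SimpleGraph.Walk.length_cons]; omega

open Classical in
private lemma closed_wt
    (hD2 : ∀ x y : X, (x, y) ∈ D → (y, x) ∉ D)
    (hyp : ∀ (m : ℕ), 3 ≤ m → ∀ x : ZMod m → X, Function.Injective x →
        (∀ i : ZMod m, (x i, x (i + 1)) ∈ D ∨ (x (i + 1), x i) ∈ D) →
        (3 : ℤ) ∣ ((Set.ncard {i : ZMod m | (x i, x (i + 1)) ∈ D} : ℤ) -
          (Set.ncard {i : ZMod m | (x (i + 1), x i) ∈ D} : ℤ))) :
    ∀ (n : ℕ) (a : X) (p : (auxG D).Walk a a), p.length = n → (3:ℤ) ∣ wt D p := by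
  intro n
  induction n using Nat.strong_induction_on with
  | _ n ih =>
    intro a p hlen
    by_cases hnd : p.support.tail.Nodup
    · cases p with
      | nil => simp
      | @cons _ v _ h q =>
        cases q with
        | nil => exact absurd rfl h.1
        | @cons _ w _ h' q' =>
          rcases Nat.eq_zero_or_pos q'.length with h0 | hpos
          · have hwa : w = a := SimpleGraph.Walk.eq_of_length_eq_zero h0
            subst hwa
            rw [wt_cons, wt_cons, wt_eq_zero_of_length_zero q' h0]
            rcases one_dir hD2 h with ⟨h1, h2⟩ | ⟨h1, h2⟩ <;> simp [h1, h2]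
          · exact nodup_case hD2 hyp _
              (by rw [SimpleGraph.Walk.length_cons, SimpleGraph.Walk.length_cons]; omega) hnd
    · obtain ⟨u, hu⟩ := List.exists_duplicate_iff_not_nodup.mpr hnd
      have hcount : 2 ≤ p.support.tail.count u := List.duplicate_iff_two_le_count.mp hu
      have hus : u ∈ p.support := List.mem_of_mem_tail hu.mem
      have hrot := wt_rotate p hus
      have hrotlen : (p.rotate u hus).length = p.length := by
        have := (p.rotate_darts _ hus).perm.length_eq
        rwa [SimpleGraph.Walk.length_darts, SimpleGraph.Walk.length_darts] at this
      have hrc : 2 ≤ (p.rotate u hus).support.tail.count u := by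
        rwa [List.Perm.count_eq (p.support_rotate _ hus).perm]
      obtain ⟨q1, q2, hsum, h1, h2⟩ := split_walk (p.rotate u hus) hrc
      rw [← hrot, hsum]
      exact dvd_add (ih q1.length (by omega) u q1 rfl) (ih q2.length (by omega) u q2 rfl)

end aux

/-- A directed graph has a vertex 3-labelling if and only if the net length of every
cycle is divisible by 3. Cycles are indexed by `ZMod m` (so indices are taken mod `m`). -/
theorem stmt_9 {X : Type*} [Fintype X] (D : Set (X × X))
    (hD1 : ∀ x : X, (x, x) ∉ D)
    (hD2 : ∀ x y : X, (x, y) ∈ D → (y, x) ∉ D) :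
    (∃ c : X → ZMod 3, ∀ x y : X, (x, y) ∈ D → c y = c x + 1) ↔
      ∀ (m : ℕ), 3 ≤ m → ∀ x : ZMod m → X, Function.Injective x →
        (∀ i : ZMod m, (x i, x (i + 1)) ∈ D ∨ (x (i + 1), x i) ∈ D) →
        (3 : ℤ) ∣ ((Set.ncard {i : ZMod m | (x i, x (i + 1)) ∈ D} : ℤ) -
          (Set.ncard {i : ZMod m | (x (i + 1), x i) ∈ D} : ℤ)) := by
  classical
  constructor
  · rintro ⟨c, hc⟩ m hm x hinj hadj
    haveI : NeZero m := ⟨by omega⟩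
    have hsum0 : ∑ i : ZMod m, (c (x (i+1)) - c (x i)) = 0 := by
      rw [Finset.sum_sub_distrib,
        Fintype.sum_bijective (· + 1) (Equiv.addRight (1 : ZMod m)).bijective
          (fun i => c (x (i+1))) (fun i => c (x i)) (fun i => rfl), sub_self]
    have hone : ∀ i : ZMod m, (x i, x (i+1)) ∈ D → (x (i+1), x i) ∉ D := fun i h => hD2 _ _ h
    have hsum1 : ∑ i : ZMod m, (c (x (i+1)) - c (x i)) =
        ∑ i : ZMod m, (if (x i, x (i+1)) ∈ D then (1 : ZMod 3) else -1) := by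
      apply Finset.sum_congr rfl
      intro i _
      by_cases hP : (x i, x (i+1)) ∈ D
      · rw [if_pos hP, hc _ _ hP]; ring
      · have hQ := (hadj i).resolve_left hP
        rw [if_neg hP, hc _ _ hQ]; ring
    have hsplit : ∑ i : ZMod m, (if (x i, x (i+1)) ∈ D then (1 : ZMod 3) else -1) =
        (∑ i : ZMod m, (if (x i, x (i+1)) ∈ D then (1 : ZMod 3) else 0)) -
        (∑ i : ZMod m, (if (x (i+1), x i) ∈ D then (1 : ZMod 3) else 0)) := by
      rw [← Finset.sum_sub_distrib]
      apply Finset.sum_congr rfl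
      intro i _
      by_cases hP : (x i, x (i+1)) ∈ D
      · simp [hP, hone i hP]
      · have hQ := (hadj i).resolve_left hP
        simp [hP, hQ]
    have hA : (∑ i : ZMod m, (if (x i, x (i+1)) ∈ D then (1 : ZMod 3) else 0)) =
        ((Set.ncard {i : ZMod m | (x i, x (i + 1)) ∈ D} : ZMod 3)) := by
      rw [Set.ncard_eq_toFinset_card', Set.toFinset_setOf, Finset.sum_boole]
    have hB : (∑ i : ZMod m, (if (x (i+1), x i) ∈ D then (1 : ZMod 3) else 0)) =
        ((Set.ncard {i : ZMod m | (x (i + 1), x i) ∈ D} : ZMod 3)) := by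
      rw [Set.ncard_eq_toFinset_card', Set.toFinset_setOf, Finset.sum_boole]
    have key : ((Set.ncard {i : ZMod m | (x i, x (i + 1)) ∈ D} : ZMod 3)) -
        ((Set.ncard {i : ZMod m | (x (i + 1), x i) ∈ D} : ZMod 3)) = 0 := by
      rw [← hA, ← hB, ← hsplit, ← hsum1, hsum0]
    have key' : (Int.cast ((Set.ncard {i : ZMod m | (x i, x (i + 1)) ∈ D} : ℤ) -
        (Set.ncard {i : ZMod m | (x (i + 1), x i) ∈ D} : ℤ)) : ZMod 3) = 0 := by
      rw [Int.cast_sub, Int.cast_natCast, Int.cast_natCast]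
      exact key
    exact (ZMod.intCast_zmod_eq_zero_iff_dvd _ 3).mp key'
  · intro hyp
    have key := closed_wt hD2 hyp
    have hre : ∀ v : X, (auxG D).Reachable (Quot.out ((auxG D).connectedComponentMk v)) v :=
      fun v => SimpleGraph.ConnectedComponent.exact (Quot.out_eq _)
    have hw : ∀ v : X, ∃ p : (auxG D).Walk (Quot.out ((auxG D).connectedComponentMk v)) v,
        True := fun v => ⟨(hre v).some, trivial⟩
    choose pth _ using hw
    refine ⟨fun v => ((wt D (pth v) : ℤ) : ZMod 3), ?_⟩
    intro a b hab
    have hne : a ≠ b := fun h => hD1 a (h ▸ hab)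
    have hadj : (auxG D).Adj a b := ⟨hne, Or.inl hab⟩
    have hcomp : (auxG D).connectedComponentMk a = (auxG D).connectedComponentMk b :=
      SimpleGraph.ConnectedComponent.connectedComponentMk_eq_of_adj hadj
    have hout : Quot.out ((auxG D).connectedComponentMk a)
        = Quot.out ((auxG D).connectedComponentMk b) := by rw [hcomp]
    have h3 := key _ _
      ((pth a).append (SimpleGraph.Walk.cons hadj ((pth b).copy hout.symm rfl).reverse)) rfl
    have hWw : wt D ((pth a).append
        (SimpleGraph.Walk.cons hadj ((pth b).copy hout.symm rfl).reverse))
        = wt D (pth a) + 1 - wt D (pth b) := by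
      rw [wt_append, wt_cons, wt_reverse hD2, wt_copy]
      rw [if_pos hab]
      ring
    rw [hWw] at h3
    show ((wt D (pth b) : ℤ) : ZMod 3) = ((wt D (pth a) : ℤ) : ZMod 3) + 1
    have h4 : ((wt D (pth a) + 1 - wt D (pth b) : ℤ) : ZMod 3) = 0 :=
      (ZMod.intCast_zmod_eq_zero_iff_dvd _ 3).mpr h3
    push_cast at h4
    linear_combination -h4
end

section
/- Let k ≥ 4 be an integer not divisible by 3. Then the maximum over all functions w : ℤ_k → ℤ₃ of the cardinality of {x ∈ ℤ_k : w(x+1) = w(x) + 1} equals k − 1. Equivalently, the synchronous deterministic value of the directed k-cycle game is 1 − 1/k. -/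
/-- For `k ≥ 4` not divisible by 3, the synchronous deterministic value of the directed
`k`-cycle game is `1 - 1/k`: the maximum over `w : ℤ_k → ℤ₃` of
`|{x : w(x+1) = w(x) + 1}|` equals `k - 1`. -/
theorem stmt_10 (k : ℕ) (hk : 4 ≤ k) (h3 : ¬ (3 ∣ k)) :
    IsGreatest {n : ℕ | ∃ w : ZMod k → ZMod 3,
      n = Set.ncard {x : ZMod k | w (x + 1) = w x + 1}} (k - 1) := by
  haveI : NeZero k := ⟨by omega⟩
  have hcard : Nat.card (ZMod k) = k := by simp [Nat.card_eq_fintype_card, ZMod.card]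
  have hk3 : (k : ZMod 3) ≠ 0 := by
    rwa [Ne, ZMod.natCast_eq_zero_iff]
  constructor
  · -- membership: construct w
    refine ⟨fun x => (x.val : ZMod 3), ?_⟩
    have hset : {x : ZMod k | ((x + 1).val : ZMod 3) = (x.val : ZMod 3) + 1}
        = {(-1 : ZMod k)}ᶜ := by
      ext x
      simp only [Set.mem_setOf_eq, Set.mem_compl_iff, Set.mem_singleton_iff]
      constructor
      · intro h hx
        subst hx
        have : ((-1 : ZMod k) + 1) = 0 := by ring
        rw [this] at h
        have hv : ((-1 : ZMod k)).val = k - 1 := by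
          have := ZMod.val_neg_one (k - 1)
          have hkk : (k - 1).succ = k := by omega
          rwa [hkk] at this
        rw [ZMod.val_zero, hv] at h
        have : ((k - 1 : ℕ) : ZMod 3) + 1 = (k : ZMod 3) := by
          have : ((k - 1 : ℕ) : ZMod 3) = (k : ZMod 3) - 1 := by
            have : ((k - 1 : ℕ) : ZMod 3) = ((k : ℕ) : ZMod 3) - ((1 : ℕ) : ZMod 3) :=
              Nat.cast_sub (by omega)
            simpa using this
          rw [this]; ring
        rw [this] at h
        exact hk3 h.symm
      · intro hx
        haveI : Fact (1 < k) := ⟨by omega⟩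
        have hneg : ((-1 : ZMod k)).val = k - 1 := by
          have := ZMod.val_neg_one (k - 1)
          have hkk : (k - 1).succ = k := by omega
          rwa [hkk] at this
        have hv : x.val ≠ k - 1 := by
          intro hvv
          exact hx (ZMod.val_injective k (by rw [hvv, hneg]))
        have hlt : x.val + (1 : ZMod k).val < k := by
          have h1 := x.val_lt
          rw [ZMod.val_one]
          omega
        rw [ZMod.val_add_of_lt hlt, ZMod.val_one]
        push_cast
        ring
    rw [hset]
    have : ({(-1 : ZMod k)}ᶜ : Set (ZMod k)).ncard = Nat.card (ZMod k) - ({(-1 : ZMod k)} : Set (ZMod k)).ncard := by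
      have h1 := Set.ncard_add_ncard_compl ({(-1 : ZMod k)} : Set (ZMod k)) (Set.toFinite _)
        (Set.toFinite _)
      have h2 : ((Set.univ : Set (ZMod k))).ncard = Nat.card (ZMod k) := by
        simp [Set.ncard_univ]
      omega
    rw [this, hcard, Set.ncard_singleton]
  · -- upper bound
    rintro n ⟨w, rfl⟩
    by_contra hgt
    push_neg at hgt
    have hall : ∀ x : ZMod k, w (x + 1) = w x + 1 := by
      by_contra hna
      push_neg at hna
      obtain ⟨x₀, hx₀⟩ := hna
      have hsub : {x : ZMod k | w (x + 1) = w x + 1} ⊆ {x₀}ᶜ := by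
        intro y hy hyx
        simp only [Set.mem_singleton_iff] at hyx
        exact hx₀ (hyx ▸ hy)
      have hle : {x : ZMod k | w (x + 1) = w x + 1}.ncard ≤ ({x₀}ᶜ : Set (ZMod k)).ncard :=
        Set.ncard_le_ncard hsub (Set.toFinite _)
      have hcc : ({x₀}ᶜ : Set (ZMod k)).ncard = k - 1 := by
        have h1 := Set.ncard_add_ncard_compl ({x₀} : Set (ZMod k)) (Set.toFinite _)
          (Set.toFinite _)
        have h2 : ((Set.univ : Set (ZMod k))).ncard = k := by
          simp [Set.ncard_univ, hcard]
        rw [Set.ncard_singleton] at h1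
        omega
      omega
    have key : ∀ n : ℕ, w ((n : ℕ) : ZMod k) = w 0 + (n : ZMod 3) := by
      intro n
      induction n with
      | zero => simp
      | succ m ih =>
        push_cast
        rw [hall, ih]
        ring
    have := key k
    rw [ZMod.natCast_self] at this
    exact hk3 (by linear_combination -this)
end

section
/- Let k ≥ 4 be an integer not divisible by 3. Then the maximum over all pairs of functions v, w : ℤ_k → ℤ₃ of the quantity |{x ∈ ℤ_k : w(x+1) = v(x) + 1}| + |{x ∈ ℤ_k : v(x+1) = w(x) + 1}| equals 2k − 2 if k is even and 2k − 1 if k is odd. Equivalently, the (non-synchronous) deterministic value of the directed k-cycle game is 1 − 1/k when k is even and 1 − 1/(2k) when k is odd. -/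
lemma aux_chain {k : ℕ} [NeZero k] (f : ZMod k → ZMod 3) (a : ZMod k)
    (h : ∀ i : ℕ, f (a + ((2*i : ℕ) : ZMod k) + 2) = f (a + ((2*i : ℕ) : ZMod k)) + 2) :
    ∀ n : ℕ, f (a + ((2*n : ℕ) : ZMod k)) = f a + ((2*n : ℕ) : ZMod 3) := by
  intro n
  induction n with
  | zero => simp
  | succ n ih =>
    have e : a + ((2*(n+1) : ℕ) : ZMod k) = a + ((2*n : ℕ) : ZMod k) + 2 := by
      push_cast; ring
    rw [e, h n, ih]
    push_cast; ring

lemma aux_even {k : ℕ} [NeZero k] (hk2 : 2 ∣ k) (v w : ZMod k → ZMod 3) (x0 : ZMod k)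
    (h1 : ∀ x, x ≠ x0 → w (x+1) = v x + 1) (h2 : ∀ x, v (x+1) = w x + 1) : 3 ∣ k := by
  have key : ∀ i : ℕ, v (x0 + 1 + ((2*i : ℕ) : ZMod k) + 2)
      = v (x0 + 1 + ((2*i : ℕ) : ZMod k)) + 2 := by
    intro i
    have hyne : x0 + 1 + ((2*i : ℕ) : ZMod k) ≠ x0 := by
      intro hcon
      have h'' : x0 + (1 + ((2*i : ℕ) : ZMod k)) = x0 + 0 := by
        rw [add_zero, ← add_assoc]; exact hcon
      have hz : ((2*i+1 : ℕ) : ZMod k) = 0 := by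
        have := add_left_cancel h''
        rw [add_comm] at this
        push_cast at this ⊢
        exact this
      have h2' : ((2*i+1 : ℕ) : ZMod 2) = 0 := by
        have := congrArg (ZMod.castHom hk2 (ZMod 2)) hz
        rwa [map_natCast, map_zero] at this
      have := (ZMod.natCast_eq_zero_iff _ 2).mp h2'
      omega
    set y := x0 + 1 + ((2*i : ℕ) : ZMod k) with hy
    have e2 : v (y + 1 + 1) = w (y+1) + 1 := h2 (y+1)
    have e1 : w (y + 1) = v y + 1 := h1 y hyne
    have e0 : y + 2 = y + 1 + 1 := by ring
    rw [e0, e2, e1]; ring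
  have hmain := aux_chain v (x0+1) key (k/2)
  have hk' : 2 * (k/2) = k := Nat.mul_div_cancel' hk2
  rw [hk', ZMod.natCast_self, add_zero] at hmain
  have : ((k : ℕ) : ZMod 3) = 0 := by rwa [left_eq_add] at hmain
  exact (ZMod.natCast_eq_zero_iff k 3).mp this

lemma aux_all {k : ℕ} [NeZero k] (v w : ZMod k → ZMod 3)
    (h1 : ∀ x, w (x+1) = v x + 1) (h2 : ∀ x, v (x+1) = w x + 1) : 3 ∣ 2 * k := by
  have key : ∀ i : ℕ, v ((0:ZMod k) + ((2*i : ℕ) : ZMod k) + 2)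
      = v ((0:ZMod k) + ((2*i : ℕ) : ZMod k)) + 2 := by
    intro i
    set y := (0:ZMod k) + ((2*i : ℕ) : ZMod k)
    have e2 : v (y + 1 + 1) = w (y+1) + 1 := h2 (y+1)
    have e1 : w (y + 1) = v y + 1 := h1 y
    have e0 : y + 2 = y + 1 + 1 := by ring
    rw [e0, e2, e1]; ring
  have hmain := aux_chain v 0 key k
  have hz : ((2*k : ℕ) : ZMod k) = 0 :=
    (ZMod.natCast_eq_zero_iff _ k).mpr ⟨2, by ring⟩
  rw [hz, add_zero] at hmain
  have : ((2*k : ℕ) : ZMod 3) = 0 := by rwa [left_eq_add] at hmain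
  exact (ZMod.natCast_eq_zero_iff _ 3).mp this

lemma aux_val_neg_one {k : ℕ} (hk : k ≠ 0) : (-1 : ZMod k).val = k - 1 := by
  obtain ⟨m, rfl⟩ := Nat.exists_eq_succ_of_ne_zero hk
  simpa using ZMod.val_neg_one m

lemma aux_val_succ {k : ℕ} (hk : 2 ≤ k) (x : ZMod k) (hx : x ≠ -1) :
    (x + 1).val = x.val + 1 := by
  haveI : NeZero k := ⟨by omega⟩
  have h1 : x.val < k := ZMod.val_lt x
  have h2 : x.val ≠ k - 1 := by
    intro h
    apply hx
    have hx' : x = ((x.val : ℕ) : ZMod k) := (ZMod.natCast_zmod_val x).symm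
    rw [hx', h, Nat.cast_sub (by omega), ZMod.natCast_self, Nat.cast_one]
    ring
  have h3 : x.val + 1 < k := by omega
  have : x + 1 = ((x.val + 1 : ℕ) : ZMod k) := by
    rw [Nat.cast_add, Nat.cast_one, ZMod.natCast_zmod_val]
  rw [this, ZMod.val_cast_of_lt h3]

/-- For `k ≥ 4` not divisible by 3, the deterministic value of the directed `k`-cycle game
is `1 - 1/k` for even `k` and `1 - 1/(2k)` for odd `k`: the maximum over pairs
`v, w : ℤ_k → ℤ₃` of `|{x : w(x+1) = v(x)+1}| + |{x : v(x+1) = w(x)+1}|` equals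
`2k - 2` if `k` is even and `2k - 1` if `k` is odd. -/
theorem stmt_11 (k : ℕ) (hk : 4 ≤ k) (h3 : ¬ (3 ∣ k)) :
    IsGreatest {n : ℕ | ∃ v w : ZMod k → ZMod 3,
        n = Set.ncard {x : ZMod k | w (x + 1) = v x + 1} +
          Set.ncard {x : ZMod k | v (x + 1) = w x + 1}}
      (if Even k then 2 * k - 2 else 2 * k - 1) := by
  haveI : NeZero k := ⟨by omega⟩
  haveI : Fact (1 < k) := ⟨by omega⟩
  have hcard : Nat.card (ZMod k) = k := Nat.card_zmod k
  have hne : (0 : ZMod k) ≠ -1 := by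
    intro h
    have := congrArg ZMod.val h
    rw [ZMod.val_zero, aux_val_neg_one (by omega)] at this
    omega
  constructor
  · -- membership: explicit optimal strategies
    by_cases hke : Even k
    · rw [if_pos hke]
      set v : ZMod k → ZMod 3 := fun x => ((x.val : ℕ) : ZMod 3) with hv
      set w : ZMod k → ZMod 3 :=
        fun x => if x = 0 then ((k : ℕ) : ZMod 3) else ((x.val : ℕ) : ZMod 3) with hw
      refine ⟨v, w, ?_⟩
      have hS1 : {x : ZMod k | w (x + 1) = v x + 1} = Set.univ := by
        ext x
        simp only [Set.mem_setOf_eq, Set.mem_univ, iff_true]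
        by_cases hx : x = -1
        · subst hx
          have h0 : (-1 : ZMod k) + 1 = 0 := by ring
          rw [h0]
          simp only [hv, hw, if_pos rfl]
          rw [aux_val_neg_one (by omega)]
          rw [show ((k - 1 : ℕ) : ZMod 3) + 1 = (((k-1) + 1 : ℕ) : ZMod 3) by push_cast; ring]
          congr 1
          omega
        · have h0 : x + 1 ≠ 0 := by
            intro h; exact hx (by linear_combination h)
          simp only [hv, hw, if_neg h0]
          rw [aux_val_succ (by omega) x hx]
          push_cast; ring
      have hS2 : {x : ZMod k | v (x + 1) = w x + 1} = ({0, -1} : Set (ZMod k))ᶜ := by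
        ext x
        simp only [Set.mem_setOf_eq, Set.mem_compl_iff, Set.mem_insert_iff,
          Set.mem_singleton_iff, not_or]
        constructor
        · intro h
          constructor
          · rintro rfl
            simp only [hv, hw, if_pos rfl, zero_add] at h
            rw [ZMod.val_one k] at h
            have h' : ((k : ℕ) : ZMod 3) = 0 := by
              push_cast at h
              linear_combination -h
            exact absurd ((ZMod.natCast_eq_zero_iff k 3).mp h') h3
          · rintro rfl
            have h0 : (-1 : ZMod k) + 1 = 0 := by ring
            rw [h0] at h
            simp only [hv, hw, if_neg (Ne.symm hne), ZMod.val_zero] at h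
            rw [aux_val_neg_one (show k ≠ 0 by omega)] at h
            have h' : ((k : ℕ) : ZMod 3) = 0 := by
              rw [show (k : ℕ) = (k - 1) + 1 by omega]
              push_cast
              push_cast at h
              linear_combination -h
            exact absurd ((ZMod.natCast_eq_zero_iff k 3).mp h') h3
        · rintro ⟨hx0, hx1⟩
          simp only [hv, hw, if_neg hx0]
          rw [aux_val_succ (by omega) x hx1]
          push_cast; ring
      rw [hS1, hS2]
      rw [Set.ncard_univ, hcard]
      have hp : ({0, -1} : Set (ZMod k)).ncard = 2 := Set.ncard_pair hne
      have hcompl := Set.ncard_add_ncard_compl ({0, -1} : Set (ZMod k))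
      rw [hp, hcard] at hcompl
      omega
    · rw [if_neg hke]
      set v : ZMod k → ZMod 3 :=
        fun x => ((if Even x.val then x.val else x.val + k : ℕ) : ZMod 3) with hv
      set w : ZMod k → ZMod 3 :=
        fun x => ((if Even x.val then x.val + k else x.val : ℕ) : ZMod 3) with hw
      refine ⟨v, w, ?_⟩
      have hvalneg : (-1 : ZMod k).val = k - 1 := aux_val_neg_one (by omega)
      have hevk1 : Even (k - 1) := by
        rcases Nat.even_or_odd k with h | h
        · exact absurd h hke
        · obtain ⟨m, hm⟩ := h
          exact ⟨m, by omega⟩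
      have hS1 : {x : ZMod k | w (x + 1) = v x + 1} = Set.univ := by
        ext x
        simp only [Set.mem_setOf_eq, Set.mem_univ, iff_true]
        by_cases hx : x = -1
        · subst hx
          rw [show (-1 : ZMod k) + 1 = 0 by ring]
          simp only [hv, hw, hvalneg, ZMod.val_zero, if_pos hevk1, if_pos (Even.zero), zero_add]
          rw [show ((k - 1 : ℕ) : ZMod 3) + 1 = (((k-1) + 1 : ℕ) : ZMod 3) by push_cast; ring]
          congr 1
          omega
        · have hsucc := aux_val_succ (by omega) x hx
          simp only [hv, hw, hsucc]
          by_cases hp : Even x.val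
          · rw [if_pos hp, if_neg (by simp [Nat.even_add_one, hp])]
            push_cast; ring
          · rw [if_neg hp, if_pos (Nat.even_add_one.mpr hp)]
            push_cast; ring
      have hS2 : {x : ZMod k | v (x + 1) = w x + 1} = ({-1} : Set (ZMod k))ᶜ := by
        ext x
        simp only [Set.mem_setOf_eq, Set.mem_compl_iff, Set.mem_singleton_iff]
        constructor
        · intro h hx
          subst hx
          rw [show (-1 : ZMod k) + 1 = 0 by ring] at h
          simp only [hv, hw, hvalneg, ZMod.val_zero, if_pos hevk1, if_pos (Even.zero),
            zero_add] at h
          have h' : ((2 * k : ℕ) : ZMod 3) = 0 := by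
            rw [show 2 * k = (k - 1 + k) + 1 by omega]
            push_cast
            push_cast at h
            linear_combination -h
          have := (ZMod.natCast_eq_zero_iff _ 3).mp h'
          omega
        · intro hx
          have hsucc := aux_val_succ (by omega) x hx
          simp only [hv, hw, hsucc]
          by_cases hp : Even x.val
          · rw [if_pos hp, if_neg (by simp [Nat.even_add_one, hp])]
            push_cast; ring
          · rw [if_neg hp, if_pos (Nat.even_add_one.mpr hp)]
            push_cast; ring
      rw [hS1, hS2]
      rw [Set.ncard_univ, hcard]
      have hp : ({-1} : Set (ZMod k)).ncard = 1 := Set.ncard_singleton _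
      have hcompl := Set.ncard_add_ncard_compl ({-1} : Set (ZMod k))
      rw [hp, hcard] at hcompl
      omega
  · -- upper bound
    rintro n ⟨v, w, rfl⟩
    set S1 := {x : ZMod k | w (x + 1) = v x + 1} with hS1
    set S2 := {x : ZMod k | v (x + 1) = w x + 1} with hS2
    have hc1 := Set.ncard_add_ncard_compl S1
    have hc2 := Set.ncard_add_ncard_compl S2
    rw [hcard] at hc1 hc2
    -- key: the number of violated constraints is ≥ 2 if k is even, ≥ 1 always
    have hnotall : ¬ (S1ᶜ.ncard = 0 ∧ S2ᶜ.ncard = 0) := by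
      rintro ⟨e1, e2⟩
      have he1 : S1ᶜ = ∅ := (Set.ncard_eq_zero).mp e1
      have he2 : S2ᶜ = ∅ := (Set.ncard_eq_zero).mp e2
      have h1 : ∀ x, w (x+1) = v x + 1 := fun x => by
        by_contra hx
        exact absurd (Set.eq_empty_iff_forall_notMem.mp he1 x) (by simpa [hS1] using hx)
      have h2 : ∀ x, v (x+1) = w x + 1 := fun x => by
        by_contra hx
        exact absurd (Set.eq_empty_iff_forall_notMem.mp he2 x) (by simpa [hS2] using hx)
      have := aux_all v w h1 h2
      omega
    by_cases hke : Even k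
    · rw [if_pos hke]
      by_contra hlt
      push_neg at hlt
      have hsum : S1ᶜ.ncard + S2ᶜ.ncard ≤ 1 := by omega
      have hk2 : 2 ∣ k := hke.two_dvd
      -- one of the two failure sets is empty, the other has at most one element
      rcases (show S1ᶜ.ncard = 0 ∨ S2ᶜ.ncard = 0 by omega) with e | e
      · -- all C1 hold, at most one C2 fails
        have he : S1ᶜ = ∅ := (Set.ncard_eq_zero (Set.toFinite _)).mp e
        have h1 : ∀ x, w (x+1) = v x + 1 := fun x => by
          by_contra hx
          exact absurd (Set.eq_empty_iff_forall_notMem.mp he x) (by simpa [hS1] using hx)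
        have hle : ∀ a ∈ S2ᶜ, ∀ b ∈ S2ᶜ, a = b :=
          (Set.ncard_le_one (Set.toFinite _)).mp (by omega)
        by_cases hemp : (S2ᶜ).Nonempty
        · obtain ⟨x0, hx0⟩ := hemp
          have h2 : ∀ x, x ≠ x0 → v (x+1) = w x + 1 := by
            intro x hx
            by_contra hcon
            exact hx (hle x (by simpa [hS2] using hcon) x0 hx0)
          exact h3 (aux_even hk2 w v x0 h2 h1)
        · rw [Set.not_nonempty_iff_eq_empty] at hemp
          have h2 : ∀ x, v (x+1) = w x + 1 := fun x => by
            by_contra hx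
            exact absurd (Set.eq_empty_iff_forall_notMem.mp hemp x) (by simpa [hS2] using hx)
          have := aux_all v w h1 h2
          omega
      · -- all C2 hold, at most one C1 fails
        have he : S2ᶜ = ∅ := (Set.ncard_eq_zero (Set.toFinite _)).mp e
        have h2 : ∀ x, v (x+1) = w x + 1 := fun x => by
          by_contra hx
          exact absurd (Set.eq_empty_iff_forall_notMem.mp he x) (by simpa [hS2] using hx)
        have hle : ∀ a ∈ S1ᶜ, ∀ b ∈ S1ᶜ, a = b :=
          (Set.ncard_le_one (Set.toFinite _)).mp (by omega)
        by_cases hemp : (S1ᶜ).Nonempty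
        · obtain ⟨x0, hx0⟩ := hemp
          have h1 : ∀ x, x ≠ x0 → w (x+1) = v x + 1 := by
            intro x hx
            by_contra hcon
            exact hx (hle x (by simpa [hS1] using hcon) x0 hx0)
          exact h3 (aux_even hk2 v w x0 h1 h2)
        · rw [Set.not_nonempty_iff_eq_empty] at hemp
          have h1 : ∀ x, w (x+1) = v x + 1 := fun x => by
            by_contra hx
            exact absurd (Set.eq_empty_iff_forall_notMem.mp hemp x) (by simpa [hS1] using hx)
          have := aux_all v w h1 h2
          omega
    · rw [if_neg hke]
      by_contra hlt
      push_neg at hlt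
      exact hnotall ⟨by omega, by omega⟩
end

section
/- Let k ≥ 4 be an integer not divisible by 3, let θ = 2π/(3k), c = cos θ, t = (1 + 2c)/3, and α = 2(1 − c)/3. Let S_n denote the n × n cyclic shift matrix (S_n e_j = e_{j+1}, indices mod n) and ⊗ the Kronecker product. Then the real symmetric 3k × 3k matrix t·I_{3k} + (α/2)·(I_k ⊗ (S_3 + S_3ᵀ)) − (1/2)·((S_k ⊗ S_3) + (S_k ⊗ S_3)ᵀ) is positive semidefinite. (This is the matrix inequality establishing the upper bound ω_qc^s(C_k^d) ≤ (1 + 2cos(2π/(3k)))/3 for the directed k-cycle game.) -/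
open Matrix
open scoped Kronecker

/-- The `n × n` cyclic forward shift matrix `e_j ↦ e_{j+1}` (indices mod `n`). -/
def cyclicShift (n : ℕ) : Matrix (Fin n) (Fin n) ℝ :=
  Matrix.of fun i j => if (i : ℕ) = ((j : ℕ) + 1) % n then 1 else 0

noncomputable section

open Complex Finset

namespace Stmt14

/-- exponential helper -/
def E (k : ℕ) (r s : ℤ) (p q : ℕ) : ℂ :=
  Complex.exp (2 * Real.pi * I * r * p / k + 2 * Real.pi * I * s * q / 3)

lemma sum_exp_fin (n : ℕ) (hn : 0 < n) (r : ℤ) :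
    (∑ p : Fin n, Complex.exp (2 * Real.pi * I * r * p / n)) =
      if (n : ℤ) ∣ r then (n : ℂ) else 0 := by
  have hn0 : (n : ℂ) ≠ 0 := Nat.cast_ne_zero.mpr hn.ne'
  have hz : ∀ p : Fin n, Complex.exp (2 * Real.pi * I * r * p / n)
      = Complex.exp (2 * Real.pi * I * r / n) ^ (p : ℕ) := by
    intro p
    rw [← Complex.exp_nat_mul]
    ring_nf
  simp only [hz]
  rw [Fin.sum_univ_eq_sum_range (fun i => Complex.exp (2 * Real.pi * I * r / n) ^ i)]
  by_cases hdvd : (n : ℤ) ∣ r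
  · obtain ⟨c, rfl⟩ := hdvd
    have : Complex.exp (2 * Real.pi * I * (↑n * c) / n) = 1 := by
      have : (2 : ℂ) * Real.pi * I * (↑n * c) / n = c * (2 * Real.pi * I) := by
        field_simp
      rw [this, Complex.exp_int_mul_two_pi_mul_I]
    simp [this]
  · have hne1 : Complex.exp (2 * Real.pi * I * r / n) ≠ 1 := by
      intro h
      rw [Complex.exp_eq_one_iff] at h
      obtain ⟨m, hm⟩ := h
      apply hdvd
      refine ⟨m, ?_⟩
      have hpi : (Real.pi : ℂ) ≠ 0 := Complex.ofReal_ne_zero.mpr Real.pi_ne_zero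
      have : (r : ℂ) = n * m := by
        field_simp at hm
        have h2 : (2 * ↑Real.pi * Complex.I) * (r : ℂ) = (2 * ↑Real.pi * Complex.I) * (n * m) := by
          rw [hm]
        have hne : (2 * (Real.pi:ℂ) * Complex.I) ≠ 0 := by
          simp [Complex.I_ne_zero, hpi]
        exact mul_left_cancel₀ hne h2
      exact_mod_cast this
    rw [geom_sum_eq hne1]
    have hpow : Complex.exp (2 * Real.pi * I * r / n) ^ n = 1 := by
      rw [← Complex.exp_nat_mul]
      have : (n : ℂ) * (2 * Real.pi * I * r / n) = r * (2 * Real.pi * I) := by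
        field_simp
      rw [this, Complex.exp_int_mul_two_pi_mul_I]
    rw [hpow]
    simp [hdvd]

lemma keySum (k : ℕ) (hk : 0 < k) (r s : ℤ) :
    (∑ p : Fin k, ∑ q : Fin 3, E k r s p q) =
      if ((k : ℤ) ∣ r ∧ (3 : ℤ) ∣ s) then (3 * k : ℂ) else 0 := by
  have hsplit : ∀ (p : Fin k) (q : Fin 3), E k r s p q =
      Complex.exp (2 * Real.pi * I * r * p / k) * Complex.exp (2 * Real.pi * I * s * q / ((3:ℕ):ℂ)) := by
    intro p q
    rw [E, Complex.exp_add]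
    norm_num
  simp only [hsplit]
  rw [← Finset.sum_mul_sum]
  rw [sum_exp_fin k hk r, sum_exp_fin 3 (by norm_num) s]
  by_cases h1 : (k : ℤ) ∣ r <;> by_cases h2 : (3 : ℤ) ∣ s <;> simp [h1, h2] <;> ring

/-- the eigenvalue -/
def lam (k : ℕ) (p q : ℕ) : ℝ :=
  (1 + 2 * Real.cos (2 * Real.pi / (3 * k))) / 3
    + (2 * (1 - Real.cos (2 * Real.pi / (3 * k))) / 3) * Real.cos (2 * Real.pi * q / 3)
    - Real.cos (2 * Real.pi * p / k + 2 * Real.pi * q / 3)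

lemma pointwise (k : ℕ) (hk : 0 < k) (r s : ℤ) (p q : ℕ) :
    (lam k p q : ℂ) * E k r s p q =
      (((1 + 2 * Real.cos (2 * Real.pi / (3 * k))) / 3 : ℝ) : ℂ) * E k r s p q
      + (((2 * (1 - Real.cos (2 * Real.pi / (3 * k))) / 3 : ℝ) : ℂ) / 2) *
          (E k r (s + 1) p q + E k r (s - 1) p q)
      - (1 / 2 : ℂ) * (E k (r + 1) (s + 1) p q + E k (r - 1) (s - 1) p q) := by
  have hk0 : (k : ℂ) ≠ 0 := Nat.cast_ne_zero.mpr hk.ne'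
  have coscast : ∀ x : ℝ, ((Real.cos x : ℝ) : ℂ)
      = (Complex.exp (x * I) + Complex.exp (-x * I)) / 2 := by
    intro x; rw [Complex.ofReal_cos, Complex.cos]
  have h1 : E k r (s + 1) p q = E k r s p q * Complex.exp (2 * Real.pi * I * q / 3) := by
    rw [E, E, ← Complex.exp_add]; congr 1; push_cast; ring
  have h2 : E k r (s - 1) p q = E k r s p q * Complex.exp (-(2 * Real.pi * I * q / 3)) := by
    rw [E, E, ← Complex.exp_add]; congr 1; push_cast; ring
  have h3 : E k (r + 1) (s + 1) p q = E k r s p q *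
      (Complex.exp (2 * Real.pi * I * p / k) * Complex.exp (2 * Real.pi * I * q / 3)) := by
    rw [E, E, ← Complex.exp_add, ← Complex.exp_add]; congr 1; push_cast; ring
  have h4 : E k (r - 1) (s - 1) p q = E k r s p q *
      (Complex.exp (-(2 * Real.pi * I * p / k)) * Complex.exp (-(2 * Real.pi * I * q / 3))) := by
    rw [E, E, ← Complex.exp_add, ← Complex.exp_add]; congr 1; push_cast; ring
  have c1 : ((Real.cos (2 * Real.pi * q / 3) : ℝ) : ℂ)
      = (Complex.exp (2 * Real.pi * I * q / 3) + Complex.exp (-(2 * Real.pi * I * q / 3))) / 2 := by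
    rw [coscast]; congr 2
    · push_cast; ring
    · push_cast; ring
  have c2 : ((Real.cos (2 * Real.pi * p / k + 2 * Real.pi * q / 3) : ℝ) : ℂ)
      = (Complex.exp (2 * Real.pi * I * p / k) * Complex.exp (2 * Real.pi * I * q / 3)
        + Complex.exp (-(2 * Real.pi * I * p / k)) * Complex.exp (-(2 * Real.pi * I * q / 3))) / 2 := by
    rw [coscast, ← Complex.exp_add, ← Complex.exp_add]; congr 2
    · push_cast; ring
    · push_cast; ring
  rw [h1, h2, h3, h4]
  rw [lam]
  push_cast [c1, c2]
  ring


lemma cos_mul_le (k : ℕ) (hk : 4 ≤ k) (m : ℤ) (hm : ¬ ((3 * k : ℤ) ∣ m)) :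
    Real.cos (m * (2 * Real.pi / (3 * k))) ≤ Real.cos (2 * Real.pi / (3 * k)) := by
  have hkpos : (0:ℝ) < 3 * k := by positivity
  set θ : ℝ := 2 * Real.pi / (3 * k) with hθ
  have hθpos : 0 < θ := by positivity
  have hfull : (3 * k : ℝ) * θ = 2 * Real.pi := by
    rw [hθ]; field_simp
  have hθπ : θ ≤ Real.pi := by
    rw [hθ]
    rw [div_le_iff₀ hkpos]
    have hπ : 0 < Real.pi := Real.pi_pos
    have : (12:ℝ) ≤ 3 * k := by
      have : (4:ℝ) ≤ (k:ℝ) := by exact_mod_cast hk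
      linarith
    nlinarith
  set m' : ℤ := m % (3 * k) with hm'
  have h3k : (0:ℤ) < 3 * k := by positivity
  have hm'0 : 0 ≤ m' := Int.emod_nonneg m h3k.ne'
  have hm'lt : m' < 3 * k := Int.emod_lt_of_pos m h3k
  have hm'ne : m' ≠ 0 := by
    intro h
    exact hm (Int.dvd_of_emod_eq_zero (by rw [← hm']; exact h))
  have hcos : Real.cos (m * θ) = Real.cos (m' * θ) := by
    have hdecomp : (m:ℝ) * θ = m' * θ + (m / (3 * k) : ℤ) * (2 * Real.pi) := by
      have : m = m' + 3 * k * (m / (3 * k)) := by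
        rw [hm']; exact (Int.emod_add_mul_ediv m (3 * k)).symm
      rw [← hfull]
      have hcast : (m:ℝ) = (m':ℝ) + 3 * k * ((m / (3 * k) : ℤ) : ℝ) := by
        exact_mod_cast congrArg (fun z : ℤ => (z:ℝ)) this
      rw [hcast]; push_cast; ring
    rw [hdecomp, Real.cos_add_int_mul_two_pi]
  rw [hcos]
  have h1le : (1:ℝ) ≤ (m':ℝ) := by exact_mod_cast hm'0.lt_of_ne (Ne.symm hm'ne)
  have hub : (m':ℝ) ≤ 3 * k - 1 := by
    have : m' ≤ 3 * k - 1 := by omega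
    exact_mod_cast this
  have hlb' : θ ≤ m' * θ := by nlinarith
  have hub' : (m':ℝ) * θ ≤ 2 * Real.pi - θ := by nlinarith
  by_cases hcase : (m':ℝ) * θ ≤ Real.pi
  · exact Real.cos_le_cos_of_nonneg_of_le_pi hθpos.le hcase hlb'
  · push_neg at hcase
    have href : Real.cos ((m':ℝ) * θ) = Real.cos (2 * Real.pi - m' * θ) := by
      rw [Real.cos_sub]
      simp [Real.cos_two_pi, Real.sin_two_pi]
    rw [href]
    apply Real.cos_le_cos_of_nonneg_of_le_pi hθpos.le (by linarith) (by linarith)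

lemma lam_nonneg (k : ℕ) (hk : 4 ≤ k) (h3 : ¬ (3 ∣ k)) (p : Fin k) (q : Fin 3) :
    0 ≤ lam k p q := by
  have hkpos : 0 < k := by omega
  have hkR : (0:ℝ) < (k:ℝ) := by exact_mod_cast hkpos
  set c : ℝ := Real.cos (2 * Real.pi / (3 * k)) with hc
  have harg : ∀ m : ℤ, ¬ ((3 * k : ℤ) ∣ m) → Real.cos (m * (2 * Real.pi / (3 * k))) ≤ c :=
    fun m hm => cos_mul_le k hk m hm
  rw [lam]
  fin_cases q
  · -- q = 0
    simp only [Fin.val_zero, Nat.cast_zero]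
    have h1 : Real.cos (2 * Real.pi * 0 / 3) = 1 := by norm_num
    have h2 : Real.cos (2 * Real.pi * p / k + 2 * Real.pi * 0 / 3) ≤ 1 := by
      simpa using Real.cos_le_one _
    rw [h1] at *
    nlinarith [h2]
  · -- q = 1
    simp only [Fin.val_one, Nat.cast_one]
    have h1 : Real.cos (2 * Real.pi * 1 / 3) = -(1/2) := by
      rw [show 2 * Real.pi * 1 / 3 = Real.pi - Real.pi / 3 by ring, Real.cos_pi_sub,
        Real.cos_pi_div_three]
    have hmle : Real.cos (2 * Real.pi * p / k + 2 * Real.pi * 1 / 3) ≤ c := by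
      have hargeq : 2 * Real.pi * p / k + 2 * Real.pi * 1 / 3
          = ((3 * (p:ℤ) + k : ℤ) : ℝ) * (2 * Real.pi / (3 * k)) := by
        push_cast; field_simp
      rw [hargeq]
      apply harg
      intro hdvd
      have : (3:ℤ) ∣ (k:ℤ) := by
        have h33 : (3:ℤ) ∣ 3 * (p:ℤ) + k := dvd_trans ⟨(k:ℤ), by ring⟩ hdvd
        omega
      exact h3 (by exact_mod_cast this)
    rw [h1]
    linarith
  · -- q = 2
    simp only
    have h1 : Real.cos (2 * Real.pi * (2:ℕ) / 3) = -(1/2) := by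
      rw [show 2 * Real.pi * (2:ℕ) / 3 = Real.pi / 3 + Real.pi by push_cast; ring,
        Real.cos_add_pi, Real.cos_pi_div_three]
    have hmle : Real.cos (2 * Real.pi * p / k + 2 * Real.pi * (2:ℕ) / 3) ≤ c := by
      have hargeq : 2 * Real.pi * p / k + 2 * Real.pi * (2:ℕ) / 3
          = ((3 * (p:ℤ) + 2 * k : ℤ) : ℝ) * (2 * Real.pi / (3 * k)) := by
        push_cast; field_simp
      rw [hargeq]
      apply harg
      intro hdvd
      have : (3:ℤ) ∣ (k:ℤ) := by
        have h33 : (3:ℤ) ∣ 3 * (p:ℤ) + 2 * k := dvd_trans ⟨(k:ℤ), by ring⟩ hdvd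
        omega
      exact h3 (by exact_mod_cast this)
    rw [h1]
    linarith


lemma dvd_sub_iff (n : ℕ) (hn : 0 < n) (a a' : Fin n) :
    (n : ℤ) ∣ ((a : ℤ) - (a' : ℤ)) ↔ a = a' := by
  constructor
  · intro h
    have hb1 : (a : ℤ) < n := by exact_mod_cast a.isLt
    have hb2 : (a' : ℤ) < n := by exact_mod_cast a'.isLt
    have hb3 : 0 ≤ (a : ℤ) := Int.natCast_nonneg _
    have hb4 : 0 ≤ (a' : ℤ) := Int.natCast_nonneg _
    have := Int.eq_zero_of_abs_lt_dvd h (by rw [abs_lt]; omega)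
    have : (a : ℤ) = a' := by omega
    exact Fin.ext (by exact_mod_cast this)
  · rintro rfl; simp

lemma dvd_sub_one_iff (n : ℕ) (hn : 0 < n) (a a' : Fin n) :
    (n : ℤ) ∣ ((a : ℤ) - (a' : ℤ) - 1) ↔ (a : ℕ) = ((a' : ℕ) + 1) % n := by
  have hb1 : (a : ℤ) < n := by exact_mod_cast a.isLt
  have hb2 : (a' : ℤ) < n := by exact_mod_cast a'.isLt
  have hb3 : 0 ≤ (a : ℤ) := Int.natCast_nonneg _
  have hb4 : 0 ≤ (a' : ℤ) := Int.natCast_nonneg _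
  have hnz : (0 : ℤ) < n := by exact_mod_cast hn
  constructor
  · rintro ⟨c, hc⟩
    have hchi : c ≤ 0 := by
      by_contra hcon
      push_neg at hcon
      have h1 : (1 : ℤ) ≤ c := hcon
      have := mul_le_mul_of_nonneg_left h1 hnz.le
      omega
    have hclo : -1 ≤ c := by
      by_contra hcon
      push_neg at hcon
      have h1 : c ≤ -2 := by omega
      have := mul_le_mul_of_nonneg_left h1 hnz.le
      omega
    have hcc : c = 0 ∨ c = -1 := by omega
    rcases hcc with rfl | rfl
    · have ha : (a : ℤ) = (a' : ℤ) + 1 := by omega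
      have ha' : (a : ℕ) = (a' : ℕ) + 1 := by exact_mod_cast ha
      rw [ha', Nat.mod_eq_of_lt (by omega)]
    · have h0 : (a : ℤ) = 0 ∧ (a' : ℤ) = n - 1 := by omega
      have ha : (a : ℕ) = 0 := by exact_mod_cast h0.1
      have ha' : (a' : ℕ) + 1 = n := by
        have : ((a' : ℕ) : ℤ) + 1 = n := by omega
        exact_mod_cast this
      rw [ha, ha', Nat.mod_self]
  · intro h
    by_cases h' : (a' : ℕ) + 1 < n
    · rw [Nat.mod_eq_of_lt h'] at h
      have : (a : ℤ) = (a' : ℤ) + 1 := by exact_mod_cast h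
      exact ⟨0, by omega⟩
    · have hend : (a' : ℕ) + 1 = n := by omega
      rw [hend, Nat.mod_self] at h
      have ha : (a : ℤ) = 0 := by exact_mod_cast h
      have ha' : (a' : ℤ) = n - 1 := by
        have : ((a' : ℕ) : ℤ) + 1 = n := by exact_mod_cast hend
        omega
      exact ⟨-1, by omega⟩

lemma dvd_add_one_iff (n : ℕ) (hn : 0 < n) (a a' : Fin n) :
    (n : ℤ) ∣ ((a : ℤ) - (a' : ℤ) + 1) ↔ (a' : ℕ) = ((a : ℕ) + 1) % n := by
  rw [← dvd_sub_one_iff n hn a' a, ← dvd_neg]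
  constructor <;> intro h <;> [skip; skip] <;>
    · obtain ⟨c, hc⟩ := h; exact ⟨c, by omega⟩

/-- entry values -/
def dd (k : ℕ) (r s : ℤ) : ℝ := if ((k : ℤ) ∣ r ∧ (3 : ℤ) ∣ s) then 1 else 0

def ff (k : ℕ) (r s : ℤ) : ℝ :=
  (1 + 2 * Real.cos (2 * Real.pi / (3 * k))) / 3 * dd k r s
    + ((2 * (1 - Real.cos (2 * Real.pi / (3 * k))) / 3) / 2) * (dd k r (s + 1) + dd k r (s - 1))
    - (1 / 2) * (dd k (r + 1) (s + 1) + dd k (r - 1) (s - 1))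

lemma entrySum (k : ℕ) (hk : 0 < k) (r s : ℤ) :
    (∑ p : Fin k, ∑ q : Fin 3, (lam k p q : ℂ) * E k r s p q)
      = (3 * k : ℂ) * ((ff k r s : ℝ) : ℂ) := by
  have hpw : ∀ (p : Fin k) (q : Fin 3), (lam k (p : ℕ) (q : ℕ) : ℂ) * E k r s p q =
      (((1 + 2 * Real.cos (2 * Real.pi / (3 * k))) / 3 : ℝ) : ℂ) * E k r s p q
      + (((2 * (1 - Real.cos (2 * Real.pi / (3 * k))) / 3 : ℝ) : ℂ) / 2) *
          (E k r (s + 1) p q + E k r (s - 1) p q)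
      - (1 / 2 : ℂ) * (E k (r + 1) (s + 1) p q + E k (r - 1) (s - 1) p q) := by
    intro p q; exact pointwise k hk r s p q
  simp only [hpw, mul_add, Finset.sum_add_distrib, Finset.sum_sub_distrib, ← Finset.mul_sum]
  rw [keySum k hk r s, keySum k hk r (s + 1), keySum k hk r (s - 1),
    keySum k hk (r + 1) (s + 1), keySum k hk (r - 1) (s - 1)]
  have hite : ∀ (c : Prop) [Decidable c], (if c then (3 * k : ℂ) else 0)
      = (3 * k : ℂ) * (if c then (1 : ℝ) else 0) := by
    intro c _; split <;> simp
  rw [ff, dd, dd, dd, dd, dd]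
  push_cast [apply_ite (fun x : ℝ => (x : ℂ))]
  rw [hite, hite, hite, hite, hite]
  push_cast
  simp only [apply_ite (fun x : ℝ => (x : ℂ)), Complex.ofReal_one, Complex.ofReal_zero]
  ring


def W (k : ℕ) (p q : ℕ) (u : Fin k × Fin 3) : ℂ :=
  Complex.exp (2 * Real.pi * I * p * u.1 / k + 2 * Real.pi * I * q * u.2 / 3)

lemma WWbar (k : ℕ) (p q : ℕ) (u v : Fin k × Fin 3) :
    W k p q v * (starRingEnd ℂ) (W k p q u)
      = E k ((v.1 : ℤ) - (u.1 : ℤ)) ((v.2 : ℤ) - (u.2 : ℤ)) p q := by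
  rw [W, W, E, ← Complex.exp_conj, ← Complex.exp_add]
  congr 1
  simp only [map_add, _root_.map_mul, map_div₀, Complex.conj_I, Complex.conj_ofReal,
    map_natCast, map_ofNat]
  push_cast
  ring

lemma ddneg (k : ℕ) (r s : ℤ) : dd k (-r) (-s) = dd k r s := by
  simp [dd]

lemma ffsymm (k : ℕ) (r s : ℤ) : ff k (-r) (-s) = ff k r s := by
  have h1 : dd k (-r) (-s) = dd k r s := ddneg k r s
  have h2 : dd k (-r) (-s + 1) = dd k r (s - 1) := by
    rw [show (-s + 1 : ℤ) = -(s - 1) by ring, ddneg]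
  have h3 : dd k (-r) (-s - 1) = dd k r (s + 1) := by
    rw [show (-s - 1 : ℤ) = -(s + 1) by ring, ddneg]
  have h4 : dd k (-r + 1) (-s + 1) = dd k (r - 1) (s - 1) := by
    rw [show (-r + 1 : ℤ) = -(r - 1) by ring, show (-s + 1 : ℤ) = -(s - 1) by ring, ddneg]
  have h5 : dd k (-r - 1) (-s - 1) = dd k (r + 1) (s + 1) := by
    rw [show (-r - 1 : ℤ) = -(r + 1) by ring, show (-s - 1 : ℤ) = -(s + 1) by ring, ddneg]
  rw [ff, ff, h1, h2, h3, h4, h5]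
  ring

lemma dvd_sub_iff3 (b b' : Fin 3) : (3 : ℤ) ∣ ((b : ℤ) - (b' : ℤ)) ↔ b = b' := by
  exact_mod_cast dvd_sub_iff 3 (by norm_num) b b'

lemma dvd_sub_one_iff3 (b b' : Fin 3) :
    (3 : ℤ) ∣ ((b : ℤ) - (b' : ℤ) - 1) ↔ (b : ℕ) = ((b' : ℕ) + 1) % 3 := by
  exact_mod_cast dvd_sub_one_iff 3 (by norm_num) b b'

lemma dvd_add_one_iff3 (b b' : Fin 3) :
    (3 : ℤ) ∣ ((b : ℤ) - (b' : ℤ) + 1) ↔ (b' : ℕ) = ((b : ℕ) + 1) % 3 := by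
  exact_mod_cast dvd_add_one_iff 3 (by norm_num) b b'

lemma entryM (k : ℕ) (hk : 4 ≤ k) (u v : Fin k × Fin 3) :
    (((1 + 2 * Real.cos (2 * Real.pi / (3 * k))) / 3) •
        (1 : Matrix (Fin k × Fin 3) (Fin k × Fin 3) ℝ) +
      ((2 * (1 - Real.cos (2 * Real.pi / (3 * k))) / 3) / 2) •
        ((1 : Matrix (Fin k) (Fin k) ℝ) ⊗ₖ (cyclicShift 3 + (cyclicShift 3)ᵀ)) -
      (1 / 2 : ℝ) •
        ((cyclicShift k ⊗ₖ cyclicShift 3) + (cyclicShift k ⊗ₖ cyclicShift 3)ᵀ)) u v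
      = ff k ((u.1 : ℤ) - (v.1 : ℤ)) ((u.2 : ℤ) - (v.2 : ℤ)) := by
  obtain ⟨a, b⟩ := u
  obtain ⟨a', b'⟩ := v
  have hkpos : 0 < k := by omega
  have e1 : ((k : ℤ) ∣ ((a : ℤ) - (a' : ℤ)) ∧ (3 : ℤ) ∣ ((b : ℤ) - (b' : ℤ)))
      ↔ ((a, b) = (a', b')) := by
    rw [dvd_sub_iff k hkpos, dvd_sub_iff3, Prod.mk.injEq]
  have e2 : ((k : ℤ) ∣ ((a : ℤ) - (a' : ℤ)) ∧ (3 : ℤ) ∣ ((b : ℤ) - (b' : ℤ) + 1))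
      ↔ (a = a' ∧ (b' : ℕ) = ((b : ℕ) + 1) % 3) := by
    rw [dvd_sub_iff k hkpos, dvd_add_one_iff3]
  have e3 : ((k : ℤ) ∣ ((a : ℤ) - (a' : ℤ)) ∧ (3 : ℤ) ∣ ((b : ℤ) - (b' : ℤ) - 1))
      ↔ (a = a' ∧ (b : ℕ) = ((b' : ℕ) + 1) % 3) := by
    rw [dvd_sub_iff k hkpos, dvd_sub_one_iff3]
  have e4 : ((k : ℤ) ∣ ((a : ℤ) - (a' : ℤ) + 1) ∧ (3 : ℤ) ∣ ((b : ℤ) - (b' : ℤ) + 1))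
      ↔ ((a' : ℕ) = ((a : ℕ) + 1) % k ∧ (b' : ℕ) = ((b : ℕ) + 1) % 3) := by
    rw [dvd_add_one_iff k hkpos, dvd_add_one_iff3]
  have e5 : ((k : ℤ) ∣ ((a : ℤ) - (a' : ℤ) - 1) ∧ (3 : ℤ) ∣ ((b : ℤ) - (b' : ℤ) - 1))
      ↔ ((a : ℕ) = ((a' : ℕ) + 1) % k ∧ (b : ℕ) = ((b' : ℕ) + 1) % 3) := by
    rw [dvd_sub_one_iff k hkpos, dvd_sub_one_iff3]
  rw [ff, dd, dd, dd, dd, dd, if_congr e1 rfl rfl, if_congr e2 rfl rfl, if_congr e3 rfl rfl,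
    if_congr e4 rfl rfl, if_congr e5 rfl rfl]
  simp only [Matrix.add_apply, Matrix.sub_apply, Matrix.smul_apply, Matrix.kroneckerMap_apply,
    Matrix.transpose_apply, Matrix.one_apply, cyclicShift, Matrix.of_apply, smul_eq_mul,
    Prod.mk.injEq, ite_and]
  split_ifs <;> ring


lemma sum_swap4 {α β γ δ : Type*} [Fintype α] [Fintype β] [Fintype γ] [Fintype δ]
    (f : α → β → γ → δ → ℂ) :
    ∑ a, ∑ b, ∑ c, ∑ d, f a b c d = ∑ c, ∑ d, ∑ a, ∑ b, f a b c d := by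
  calc ∑ a, ∑ b, ∑ c, ∑ d, f a b c d
      = ∑ a, ∑ c, ∑ b, ∑ d, f a b c d :=
        Finset.sum_congr rfl fun a _ => Finset.sum_comm
    _ = ∑ c, ∑ a, ∑ b, ∑ d, f a b c d := Finset.sum_comm
    _ = ∑ c, ∑ a, ∑ d, ∑ b, f a b c d :=
        Finset.sum_congr rfl fun c _ => Finset.sum_congr rfl fun a _ => Finset.sum_comm
    _ = ∑ c, ∑ d, ∑ a, ∑ b, f a b c d :=
        Finset.sum_congr rfl fun c _ => Finset.sum_comm

/-- The circulant matrix with symbol `ff`. -/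
def Mf (k : ℕ) : Matrix (Fin k × Fin 3) (Fin k × Fin 3) ℝ :=
  Matrix.of fun u v => ff k ((u.1 : ℤ) - (v.1 : ℤ)) ((u.2 : ℤ) - (v.2 : ℤ))

lemma Mf_posSemidef (k : ℕ) (hk : 4 ≤ k) (h3 : ¬ (3 ∣ k)) : (Mf k).PosSemidef := by
  have hkpos : 0 < k := by omega
  rw [Matrix.posSemidef_iff_dotProduct_mulVec]
  constructor
  · ext u v
    rw [Matrix.conjTranspose_apply, star_trivial]
    show Mf k v u = Mf k u v
    rw [Mf, Matrix.of_apply, Matrix.of_apply,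
      show ((v.1 : ℤ) - u.1) = -((u.1 : ℤ) - v.1) by ring,
      show ((v.2 : ℤ) - u.2) = -((u.2 : ℤ) - v.2) by ring, ffsymm]
  · intro x
    rw [star_trivial]
    set Q : ℝ := x ⬝ᵥ Mf k *ᵥ x with hQdef
    set xh : Fin k → Fin 3 → ℂ :=
      fun p q => ∑ u : Fin k × Fin 3, (x u : ℂ) * (starRingEnd ℂ) (W k p q u) with hxh
    have hSnn : 0 ≤ ∑ p : Fin k, ∑ q : Fin 3, lam k p q * Complex.normSq (xh p q) :=
      Finset.sum_nonneg fun p _ => Finset.sum_nonneg fun q _ =>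
        mul_nonneg (lam_nonneg k hk h3 p q) (Complex.normSq_nonneg _)
    have hQc : ((Q : ℝ) : ℂ) = ∑ u : Fin k × Fin 3, ∑ v : Fin k × Fin 3,
        (x u : ℂ) * (((ff k ((u.1 : ℤ) - v.1) ((u.2 : ℤ) - v.2) : ℝ) : ℂ) * (x v : ℂ)) := by
      rw [hQdef]
      simp only [dotProduct, Matrix.mulVec, Mf, Matrix.of_apply, Finset.mul_sum]
      push_cast
      rfl
    have key : (∑ p : Fin k, ∑ q : Fin 3,
        (lam k p q : ℂ) * ((Complex.normSq (xh p q) : ℝ) : ℂ))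
        = (3 * k : ℂ) * ((Q : ℝ) : ℂ) := by
      calc ∑ p : Fin k, ∑ q : Fin 3, (lam k p q : ℂ) * ((Complex.normSq (xh p q) : ℝ) : ℂ)
          = ∑ p : Fin k, ∑ q : Fin 3, ∑ u : Fin k × Fin 3, ∑ v : Fin k × Fin 3,
              (lam k p q : ℂ) * ((x u : ℂ) * (x v : ℂ) *
                E k ((v.1 : ℤ) - u.1) ((v.2 : ℤ) - u.2) p q) := by
            refine Finset.sum_congr rfl fun p _ => Finset.sum_congr rfl fun q _ => ?_
            rw [← Complex.mul_conj]
            have hconj : (starRingEnd ℂ) (xh p q)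
                = ∑ v : Fin k × Fin 3, (x v : ℂ) * W k p q v := by
              rw [hxh]
              simp only [map_sum, _root_.map_mul, Complex.conj_ofReal, Complex.conj_conj]
            rw [hconj]
            rw [show xh p q = ∑ u : Fin k × Fin 3, (x u : ℂ) * (starRingEnd ℂ) (W k p q u)
              from rfl]
            rw [Finset.sum_mul_sum, Finset.mul_sum]
            refine Finset.sum_congr rfl fun u _ => ?_
            rw [Finset.mul_sum]
            refine Finset.sum_congr rfl fun v _ => ?_
            rw [← WWbar k p q u v]
            ring
        _ = ∑ u : Fin k × Fin 3, ∑ v : Fin k × Fin 3, ∑ p : Fin k, ∑ q : Fin 3,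
              (lam k p q : ℂ) * ((x u : ℂ) * (x v : ℂ) *
                E k ((v.1 : ℤ) - u.1) ((v.2 : ℤ) - u.2) p q) := sum_swap4 _
        _ = ∑ u : Fin k × Fin 3, ∑ v : Fin k × Fin 3,
              (x u : ℂ) * (x v : ℂ) * ((3 * k : ℂ) *
                ((ff k ((v.1 : ℤ) - u.1) ((v.2 : ℤ) - u.2) : ℝ) : ℂ)) := by
            refine Finset.sum_congr rfl fun u _ => Finset.sum_congr rfl fun v _ => ?_
            rw [← entrySum k hkpos ((v.1 : ℤ) - u.1) ((v.2 : ℤ) - u.2)]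
            rw [Finset.mul_sum]
            refine Finset.sum_congr rfl fun p _ => ?_
            rw [Finset.mul_sum]
            refine Finset.sum_congr rfl fun q _ => ?_
            ring
        _ = (3 * k : ℂ) * ((Q : ℝ) : ℂ) := by
            rw [hQc, Finset.mul_sum, Finset.sum_comm]
            refine Finset.sum_congr rfl fun v _ => ?_
            rw [Finset.mul_sum]
            refine Finset.sum_congr rfl fun u _ => ?_
            ring
    have keyR : (∑ p : Fin k, ∑ q : Fin 3, lam k p q * Complex.normSq (xh p q))
        = (3 * k : ℝ) * Q := by exact_mod_cast key
    have h3k : (0 : ℝ) < 3 * k := by positivity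
    nlinarith [hSnn, keyR, h3k]

end Stmt14


/-- The matrix inequality establishing the upper bound
`ω_qc^s(C_k^d) ≤ (1 + 2cos(2π/3k))/3` for the directed `k`-cycle game. -/
theorem stmt_14 (k : ℕ) (hk : 4 ≤ k) (h3 : ¬ (3 ∣ k)) :
    (((1 + 2 * Real.cos (2 * Real.pi / (3 * k))) / 3) •
        (1 : Matrix (Fin k × Fin 3) (Fin k × Fin 3) ℝ) +
      ((2 * (1 - Real.cos (2 * Real.pi / (3 * k))) / 3) / 2) •
        ((1 : Matrix (Fin k) (Fin k) ℝ) ⊗ₖ (cyclicShift 3 + (cyclicShift 3)ᵀ)) -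
      (1 / 2 : ℝ) •
        ((cyclicShift k ⊗ₖ cyclicShift 3) + (cyclicShift k ⊗ₖ cyclicShift 3)ᵀ)).PosSemidef := by
  have hMeq : (((1 + 2 * Real.cos (2 * Real.pi / (3 * k))) / 3) •
        (1 : Matrix (Fin k × Fin 3) (Fin k × Fin 3) ℝ) +
      ((2 * (1 - Real.cos (2 * Real.pi / (3 * k))) / 3) / 2) •
        ((1 : Matrix (Fin k) (Fin k) ℝ) ⊗ₖ (cyclicShift 3 + (cyclicShift 3)ᵀ)) -
      (1 / 2 : ℝ) •
        ((cyclicShift k ⊗ₖ cyclicShift 3) + (cyclicShift k ⊗ₖ cyclicShift 3)ᵀ)) = Stmt14.Mf k := by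
    ext u v
    rw [Stmt14.Mf, Matrix.of_apply]
    exact Stmt14.entryM k hk u v
  rw [hMeq]
  exact Stmt14.Mf_posSemidef k hk h3

end
end

section
/- There exist a unit vector η ∈ ℝ⁵ and a family of vectors v : ℤ₄ × ℤ₃ → ℝ⁵ such that: ⟨v(x,a), v(x,a')⟩ = 0 for every x ∈ ℤ₄ and all a ≠ a' in ℤ₃; Σ_{a∈ℤ₃} v(x,a) = η for every x ∈ ℤ₄; ⟨v(x,a), v(y,b)⟩ ≥ 0 for all x,y ∈ ℤ₄ and a,b ∈ ℤ₃; and (1/4) Σ_{x∈ℤ₄} Σ_{a∈ℤ₃} ⟨v(x,a), v(x+1,a+1)⟩ = 2(1 − 1/√3). (That is, the synchronous vect-value of the directed 4-cycle game is at least 2(1 − 1/√3); combined with the matching upper bound, ω_vect(C₄^d) = ω_vect^s(C₄^d) = 2(1 − 1/√3).) -/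
open scoped InnerProductSpace

noncomputable section
def ss : ℝ := Real.sqrt 3
def bb : ℝ := Real.sqrt ((2*ss - 2)/9)
def cc : ℝ := Real.sqrt ((4 - 2*ss)/9)

def pc : ZMod 4 → ℝ := fun x => if x = 0 then 1 else if x = 2 then -1 else 0
def ps : ZMod 4 → ℝ := fun x => if x = 1 then 1 else if x = 3 then -1 else 0
def ec : ZMod 4 → ℝ := fun x => if x = 0 ∨ x = 2 then 1 else -1
def rc : ZMod 3 → ℝ := fun a => if a = 0 then 1 else -1/2
def rs : ZMod 3 → ℝ := fun a => if a = 0 then 0 else if a = 1 then -ss/2 else ss/2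
def ts : ZMod 3 → ℝ := fun a => if a = 0 then 0 else if a = 1 then ss/2 else -ss/2

def vv : ZMod 4 × ZMod 3 → EuclideanSpace ℝ (Fin 5) := fun p =>
  WithLp.toLp 2 ![1/3, bb*(pc p.1 * rc p.2 - ps p.1 * rs p.2), bb*(ps p.1 * rc p.2 + pc p.1 * rs p.2),
    cc*(ec p.1 * rc p.2), cc*(ec p.1 * ts p.2)]
end

lemma ip_eval (x y : ZMod 4) (a b : ZMod 3) :
    ⟪vv (x,a), vv (y,b)⟫_ℝ = 1/9
      + bb^2*((pc x * rc a - ps x * rs a)*(pc y * rc b - ps y * rs b)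
            + (ps x * rc a + pc x * rs a)*(ps y * rc b + pc y * rs b))
      + cc^2*(ec x * ec y * (rc a * rc b + ts a * ts b)) := by
  simp [vv, PiLp.inner_apply, RCLike.inner_apply, Fin.sum_univ_five]
  ring

lemma sspos : 0 ≤ ss := Real.sqrt_nonneg 3
lemma hss : ss^2 = 3 := Real.sq_sqrt (by norm_num)
lemma hss3 : ss^3 = 3*ss := by linear_combination ss * hss
lemma hlo : 1.7 ≤ ss := by nlinarith [hss, sspos]
lemma hhi : ss ≤ 1.8 := by nlinarith [hss, sspos]
lemma hbb : bb^2 = (2*ss - 2)/9 := Real.sq_sqrt (by nlinarith [hlo])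
lemma hcc : cc^2 = (4 - 2*ss)/9 := Real.sq_sqrt (by nlinarith [hhi])

@[simp] lemma pc0 : pc 0 = 1 := by simp [pc]
@[simp] lemma pc1 : pc 1 = 0 := by simp [pc, (show ((1:ZMod 4) ≠ 0) from by decide), (show ((1:ZMod 4) ≠ 2) from by decide)]
@[simp] lemma pc2 : pc 2 = -1 := by simp [pc, (show ((2:ZMod 4) ≠ 0) from by decide)]
@[simp] lemma pc3 : pc 3 = 0 := by simp [pc, (show ((3:ZMod 4) ≠ 0) from by decide), (show ((3:ZMod 4) ≠ 2) from by decide)]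
@[simp] lemma ps0 : ps 0 = 0 := by simp [ps, (show ((0:ZMod 4) ≠ 1) from by decide), (show ((0:ZMod 4) ≠ 3) from by decide)]
@[simp] lemma ps1 : ps 1 = 1 := by simp [ps]
@[simp] lemma ps2 : ps 2 = 0 := by simp [ps, (show ((2:ZMod 4) ≠ 1) from by decide), (show ((2:ZMod 4) ≠ 3) from by decide)]
@[simp] lemma ps3 : ps 3 = -1 := by simp [ps, (show ((3:ZMod 4) ≠ 1) from by decide)]
@[simp] lemma ec0 : ec 0 = 1 := by simp [ec, (show (((0:ZMod 4) = 0 ∨ (0:ZMod 4) = 2)) from by decide)]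
@[simp] lemma ec1 : ec 1 = -1 := by simp [ec, (show (¬((1:ZMod 4) = 0 ∨ (1:ZMod 4) = 2)) from by decide)]
@[simp] lemma ec2 : ec 2 = 1 := by simp [ec, (show (((2:ZMod 4) = 0 ∨ (2:ZMod 4) = 2)) from by decide)]
@[simp] lemma ec3 : ec 3 = -1 := by simp [ec, (show (¬((3:ZMod 4) = 0 ∨ (3:ZMod 4) = 2)) from by decide)]
@[simp] lemma rc0 : rc 0 = 1 := by simp [rc]
@[simp] lemma rc1 : rc 1 = -1/2 := by simp [rc, (show ((1:ZMod 3) ≠ 0) from by decide)]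
@[simp] lemma rc2 : rc 2 = -1/2 := by simp [rc, (show ((2:ZMod 3) ≠ 0) from by decide)]
@[simp] lemma rs0 : rs 0 = 0 := by simp [rs]
@[simp] lemma rs1 : rs 1 = -ss/2 := by simp [rs, (show ((1:ZMod 3) ≠ 0) from by decide)]
@[simp] lemma rs2 : rs 2 = ss/2 := by simp [rs, (show ((2:ZMod 3) ≠ 0) from by decide), (show ((2:ZMod 3) ≠ 1) from by decide)]
@[simp] lemma ts0 : ts 0 = 0 := by simp [ts]
@[simp] lemma ts1 : ts 1 = ss/2 := by simp [ts, (show ((1:ZMod 3) ≠ 0) from by decide)]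
@[simp] lemma ts2 : ts 2 = -ss/2 := by simp [ts, (show ((2:ZMod 3) ≠ 0) from by decide), (show ((2:ZMod 3) ≠ 1) from by decide)]

lemma zmod4_cases : ∀ x : ZMod 4, x = 0 ∨ x = 1 ∨ x = 2 ∨ x = 3 := by decide
lemma zmod3_cases : ∀ a : ZMod 3, a = 0 ∨ a = 1 ∨ a = 2 := by decide

lemma sum3 {M : Type*} [AddCommMonoid M] (f : ZMod 3 → M) :
    ∑ a : ZMod 3, f a = f 0 + f 1 + f 2 := by
  exact Fin.sum_univ_three f

lemma sum4 {M : Type*} [AddCommMonoid M] (f : ZMod 4 → M) :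
    ∑ x : ZMod 4, f x = f 0 + f 1 + f 2 + f 3 := by
  exact Fin.sum_univ_four f

set_option maxHeartbeats 2000000 in
lemma vv_nonneg : ∀ (x y : ZMod 4) (a b : ZMod 3), 0 ≤ ⟪vv (x, a), vv (y, b)⟫_ℝ := by
  intro x y a b
  rw [ip_eval, hbb, hcc]
  rcases zmod4_cases x with rfl|rfl|rfl|rfl <;> rcases zmod4_cases y with rfl|rfl|rfl|rfl <;>
    rcases zmod3_cases a with rfl|rfl|rfl <;> rcases zmod3_cases b with rfl|rfl|rfl <;>
    simp only [pc0,pc1,pc2,pc3,ps0,ps1,ps2,ps3,ec0,ec1,ec2,ec3,rc0,rc1,rc2,rs0,rs1,rs2,ts0,ts1,ts2] <;>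
    nlinarith [hss, hss3, hlo, hhi]

set_option maxHeartbeats 1000000 in
lemma vv_orth : ∀ (x : ZMod 4) (a a' : ZMod 3), a ≠ a' → ⟪vv (x, a), vv (x, a')⟫_ℝ = 0 := by
  intro x a a' h
  rw [ip_eval, hbb, hcc]
  rcases zmod4_cases x with rfl|rfl|rfl|rfl <;>
    rcases zmod3_cases a with rfl|rfl|rfl <;> rcases zmod3_cases a' with rfl|rfl|rfl <;>
    first
      | exact absurd rfl h
      | (simp only [pc0,pc1,pc2,pc3,ps0,ps1,ps2,ps3,ec0,ec1,ec2,ec3,rc0,rc1,rc2,rs0,rs1,rs2,ts0,ts1,ts2]; nlinarith [hss, hss3])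

set_option maxHeartbeats 1000000 in
lemma vv_sum : ∀ x : ZMod 4, ∑ a : ZMod 3, vv (x, a) = WithLp.toLp 2 ![1,0,0,0,0] := by
  intro x
  rw [sum3]
  ext i
  show vv (x,0) i + vv (x,1) i + vv (x,2) i = ![1,0,0,0,0] i
  simp only [vv]
  rcases zmod4_cases x with rfl|rfl|rfl|rfl <;>
    · fin_cases i <;>
        simp <;> first | ring | norm_num

set_option maxHeartbeats 1000000 in
lemma vv_value :
    (1 / 4 : ℝ) * ∑ x : ZMod 4, ∑ a : ZMod 3, ⟪vv (x, a), vv (x + 1, a + 1)⟫_ℝ =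
      2 * (1 - 1 / Real.sqrt 3) := by
  rw [sum4]
  rw [sum3, sum3, sum3, sum3]
  rw [show (0:ZMod 4)+1 = 1 from by decide, show (1:ZMod 4)+1 = 2 from by decide,
      show (2:ZMod 4)+1 = 3 from by decide, show (3:ZMod 4)+1 = 0 from by decide,
      show (0:ZMod 3)+1 = 1 from by decide, show (1:ZMod 3)+1 = 2 from by decide,
      show (2:ZMod 3)+1 = 0 from by decide]
  simp only [ip_eval, hbb, hcc, pc0,pc1,pc2,pc3,ps0,ps1,ps2,ps3,ec0,ec1,ec2,ec3,rc0,rc1,rc2,rs0,rs1,rs2,ts0,ts1,ts2]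
  rw [show Real.sqrt 3 = ss from rfl]
  have hne : ss ≠ 0 := by nlinarith [hlo]
  field_simp
  nlinarith [hss, hss3]

/-- The synchronous vect-value of the directed 4-cycle game is at least `2(1 - 1/√3)`. -/
theorem stmt_16 :
    ∃ (η : EuclideanSpace ℝ (Fin 5)) (v : ZMod 4 × ZMod 3 → EuclideanSpace ℝ (Fin 5)),
      ‖η‖ = 1 ∧
      (∀ (x : ZMod 4) (a a' : ZMod 3), a ≠ a' → ⟪v (x, a), v (x, a')⟫_ℝ = 0) ∧
      (∀ x : ZMod 4, ∑ a : ZMod 3, v (x, a) = η) ∧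
      (∀ (x y : ZMod 4) (a b : ZMod 3), 0 ≤ ⟪v (x, a), v (y, b)⟫_ℝ) ∧
      (1 / 4 : ℝ) * ∑ x : ZMod 4, ∑ a : ZMod 3, ⟪v (x, a), v (x + 1, a + 1)⟫_ℝ =
        2 * (1 - 1 / Real.sqrt 3) := by
  refine ⟨WithLp.toLp 2 ![1,0,0,0,0], vv, ?_, vv_orth, vv_sum, vv_nonneg, vv_value⟩
  rw [EuclideanSpace.norm_eq]
  simp [Fin.sum_univ_five]
end

section
/- Let S₃ denote the symmetric group on 3 letters (permutations of a 3-element set). Then the maximum over all functions w : S₃ → S₃ of the cardinality of the set {(x,y) ∈ S₃ × S₃ : w(x)·(w(y))⁻¹ = x·y·x⁻¹·y⁻¹} equals 24. In particular, the synchronous deterministic value of the commutator game on S₃ with uniform input density is 24/36 = 2/3, which is strictly larger than the value 1/2 of the constant strategy w ≡ identity (which counts the 18 commuting pairs). -/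
open Equiv

abbrev P3 := Equiv.Perm (Fin 3)

def mtab : Fin 6 → Fin 6 → Fin 6 :=
  ![![0,1,2,3,4,5],![1,0,4,5,2,3],![2,3,0,1,5,4],![3,2,5,4,0,1],![4,5,1,0,3,2],![5,4,3,2,1,0]]
def ctab : Fin 6 → Fin 6 → Fin 6 :=
  ![![0,0,0,0,0,0],![0,0,3,3,4,4],![0,4,0,3,4,3],![0,4,4,0,0,4],![0,3,3,0,0,3],![0,3,4,3,4,0]]

def phi : Fin 6 → P3 :=
  ![1, swap 1 2, swap 0 1, swap 0 1 * swap 1 2, swap 1 2 * swap 0 1, swap 0 2]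

def psi (x : P3) : Fin 6 :=
  if x = phi 1 then 1 else if x = phi 2 then 2 else if x = phi 3 then 3
    else if x = phi 4 then 4 else if x = phi 5 then 5 else 0

def E : Fin 6 ≃ P3 := ⟨phi, psi, by decide, by decide⟩

lemma comm_phi : ∀ i j : Fin 6, phi i * phi j * (phi i)⁻¹ * (phi j)⁻¹ = phi (ctab i j) := by
  decide

lemma cond_iff : ∀ a b c : Fin 6, (phi a * (phi b)⁻¹ = phi c) ↔ a = mtab c b := by decide

def chk (a b d e g : Fin 6) : ℕ :=
    ((if (0 : Fin 6) = mtab (ctab 0 0) (0 : Fin 6) then 1 else 0) + (if (0 : Fin 6) = mtab (ctab 0 1) a then 1 else 0) + (if (0 : Fin 6) = mtab (ctab 0 2) b then 1 else 0) + (if (0 : Fin 6) = mtab (ctab 0 3) d then 1 else 0) + (if (0 : Fin 6) = mtab (ctab 0 4) e then 1 else 0) + (if (0 : Fin 6) = mtab (ctab 0 5) g then 1 else 0)) +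
        ((if a = mtab (ctab 1 0) (0 : Fin 6) then 1 else 0) + (if a = mtab (ctab 1 1) a then 1 else 0) + (if a = mtab (ctab 1 2) b then 1 else 0) + (if a = mtab (ctab 1 3) d then 1 else 0) + (if a = mtab (ctab 1 4) e then 1 else 0) + (if a = mtab (ctab 1 5) g then 1 else 0)) +
        ((if b = mtab (ctab 2 0) (0 : Fin 6) then 1 else 0) + (if b = mtab (ctab 2 1) a then 1 else 0) + (if b = mtab (ctab 2 2) b then 1 else 0) + (if b = mtab (ctab 2 3) d then 1 else 0) + (if b = mtab (ctab 2 4) e then 1 else 0) + (if b = mtab (ctab 2 5) g then 1 else 0)) +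
        ((if d = mtab (ctab 3 0) (0 : Fin 6) then 1 else 0) + (if d = mtab (ctab 3 1) a then 1 else 0) + (if d = mtab (ctab 3 2) b then 1 else 0) + (if d = mtab (ctab 3 3) d then 1 else 0) + (if d = mtab (ctab 3 4) e then 1 else 0) + (if d = mtab (ctab 3 5) g then 1 else 0)) +
        ((if e = mtab (ctab 4 0) (0 : Fin 6) then 1 else 0) + (if e = mtab (ctab 4 1) a then 1 else 0) + (if e = mtab (ctab 4 2) b then 1 else 0) + (if e = mtab (ctab 4 3) d then 1 else 0) + (if e = mtab (ctab 4 4) e then 1 else 0) + (if e = mtab (ctab 4 5) g then 1 else 0)) +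
        ((if g = mtab (ctab 5 0) (0 : Fin 6) then 1 else 0) + (if g = mtab (ctab 5 1) a then 1 else 0) + (if g = mtab (ctab 5 2) b then 1 else 0) + (if g = mtab (ctab 5 3) d then 1 else 0) + (if g = mtab (ctab 5 4) e then 1 else 0) + (if g = mtab (ctab 5 5) g then 1 else 0))

def cardF (f : Fin 6 → Fin 6) : ℕ :=
  (Finset.univ.filter fun p : Fin 6 × Fin 6 => f p.1 = mtab (ctab p.1 p.2) (f p.2)).card

set_option maxRecDepth 10000 in
set_option maxHeartbeats 2000000 in
lemma cardF_eq (f : Fin 6 → Fin 6) (h0 : f 0 = 0) :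
    cardF f = chk (f 1) (f 2) (f 3) (f 4) (f 5) := by
  simp only [cardF, chk, Finset.card_filter, Fintype.sum_prod_type, Fin.sum_univ_six, h0]

set_option maxHeartbeats 400000000 in
theorem keybound : ∀ a b d e g : Fin 6, chk a b d e g ≤ 24 := by decide

def cntP (w : P3 → P3) : ℕ :=
  (Finset.univ.filter fun p : P3 × P3 =>
    w p.1 * (w p.2)⁻¹ = p.1 * p.2 * p.1⁻¹ * p.2⁻¹).card

lemma ncard_eq (w : P3 → P3) :
    Set.ncard {p : P3 × P3 | w p.1 * (w p.2)⁻¹ = p.1 * p.2 * p.1⁻¹ * p.2⁻¹} = cntP w := by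
  unfold cntP
  rw [← Set.ncard_coe_finset]
  congr 1
  ext p
  simp [cntP]

lemma cntP_shift (w : P3 → P3) : cntP w = cntP (fun x => w x * (w 1)⁻¹) := by
  unfold cntP
  congr 1
  ext p
  have h : (w p.1 * (w 1)⁻¹) * (w p.2 * (w 1)⁻¹)⁻¹ = w p.1 * (w p.2)⁻¹ := by group
  simp only [Finset.mem_filter, Finset.mem_univ, true_and]
  show (w p.1 * (w p.2)⁻¹ = _) ↔ ((w p.1 * (w 1)⁻¹) * (w p.2 * (w 1)⁻¹)⁻¹ = _)
  rw [h]

lemma cntP_le (w : P3 → P3) (hw : w 1 = 1) : cntP w ≤ 24 := by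
  set v : Fin 6 → Fin 6 := fun i => E.symm (w (phi i)) with hv
  have hwv : ∀ i, w (phi i) = phi (v i) := fun i => (E.apply_symm_apply (w (phi i))).symm
  have hv0 : v 0 = 0 := by
    have h1 : phi 0 = 1 := rfl
    have : v 0 = E.symm (phi 0) := by rw [hv]; simp [h1, hw]
    rw [this]
    exact E.symm_apply_apply 0
  have hbridge : cntP w = cardF v := by
    unfold cntP cardF
    apply Finset.card_equiv ((E.prodCongr E).symm)
    intro p
    simp only [Finset.mem_filter, Finset.mem_univ, true_and]
    have e1 : ((E.prodCongr E).symm p).1 = E.symm p.1 := rfl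
    have e2 : ((E.prodCongr E).symm p).2 = E.symm p.2 := rfl
    rw [e1, e2]
    obtain ⟨x, y⟩ := p
    have hx : x = phi (E.symm x) := (E.apply_symm_apply x).symm
    have hy : y = phi (E.symm y) := (E.apply_symm_apply y).symm
    constructor
    · intro h
      rw [← cond_iff]
      rw [← hwv, ← hwv, ← comm_phi, ← hx, ← hy]
      exact h
    · intro h
      rw [← cond_iff] at h
      rw [← hwv, ← hwv, ← comm_phi, ← hx, ← hy] at h
      exact h
  rw [hbridge, cardF_eq v hv0]
  exact keybound _ _ _ _ _

/-- For the commutator game on `S₃` with uniform input density, the optimal synchronous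
deterministic strategy wins on `24` of the `36` input pairs (value `2/3`), strictly more
than the `18` commuting pairs counted by the constant identity strategy (value `1/2`). -/
theorem stmt_18 :
    IsGreatest {n : ℕ | ∃ w : Equiv.Perm (Fin 3) → Equiv.Perm (Fin 3),
        n = Set.ncard {p : Equiv.Perm (Fin 3) × Equiv.Perm (Fin 3) |
          w p.1 * (w p.2)⁻¹ = p.1 * p.2 * p.1⁻¹ * p.2⁻¹}} 24 ∧
      Set.ncard {p : Equiv.Perm (Fin 3) × Equiv.Perm (Fin 3) | p.1 * p.2 = p.2 * p.1} = 18 := by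
  refine ⟨⟨⟨fun x => if x * x = 1 then 1 else x⁻¹, ?_⟩, ?_⟩, ?_⟩
  · have h := ncard_eq (fun x => if x * x = 1 then 1 else x⁻¹)
    rw [h]
    decide
  · rintro n ⟨w, rfl⟩
    rw [ncard_eq, cntP_shift]
    apply cntP_le
    simp
  · rw [show {p : P3 × P3 | p.1 * p.2 = p.2 * p.1}.ncard
        = (Finset.univ.filter fun p : P3 × P3 => p.1 * p.2 = p.2 * p.1).card by
      rw [← Set.ncard_coe_finset]; congr 1; ext p; simp]
    decide
end
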